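/- arXiv:0807.1551 — 4 statements merged into one kernel-verified Lean document; each statement's English description precedes it below -/
import Mathlib

section
/- For a finite simple graph G, a vertex v with neighborhood N(v) = {v_1,...,v_k}, and the Gibbs measure of the hard-core model with activity λ, the marginal probability of v being unoccupied satisfies P_G(v ∉ I) = 1 / (1 + λ·∏_{i=1}^{k} P_{G_{i-1}}(v_i ∉ I)), where G_0 is the subgraph induced by V \ {v} and G_i is the subgraph induced by V \ {v, v_1, ..., v_i}, with the empty product equal to 1 when k = 0. -/
open Finset

/-- Hard-core partition function of the subgraph of `G` induced on `A`. -/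
noncomputable def hcZ {V : Type*} [DecidableEq V] (G : SimpleGraph V) [DecidableRel G.Adj]
    (lam : ℝ) (A : Finset V) : ℝ :=
  ∑ I ∈ A.powerset.filter (fun I => ∀ u ∈ I, ∀ w ∈ I, ¬ G.Adj u w), lam ^ I.card

/-- Probability, under the hard-core Gibbs measure on the subgraph induced on `A`,
that the random independent set does not contain `v`. -/
noncomputable def hcPnot {V : Type*} [DecidableEq V] (G : SimpleGraph V) [DecidableRel G.Adj]
    (lam : ℝ) (A : Finset V) (v : V) : ℝ :=
  (∑ I ∈ A.powerset.filter (fun I => (∀ u ∈ I, ∀ w ∈ I, ¬ G.Adj u w) ∧ v ∉ I),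
      lam ^ I.card) / hcZ G lam A

lemma hcZ_pos {V : Type*} [DecidableEq V] (G : SimpleGraph V) [DecidableRel G.Adj]
    {lam : ℝ} (hlam : 0 < lam) (A : Finset V) : 0 < hcZ G lam A := by
  apply Finset.sum_pos
  · intro I _; positivity
  · exact ⟨∅, by simp⟩

lemma hcPnot_eq {V : Type*} [DecidableEq V] (G : SimpleGraph V) [DecidableRel G.Adj]
    (lam : ℝ) (A : Finset V) (v : V) :
    hcPnot G lam A v = hcZ G lam (A.erase v) / hcZ G lam A := by
  unfold hcPnot hcZ
  congr 1
  apply Finset.sum_congr _ (fun _ _ => rfl)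
  ext I
  simp only [mem_filter, mem_powerset, Finset.subset_erase]
  tauto

lemma hcZ_rec {V : Type*} [Fintype V] [DecidableEq V] (G : SimpleGraph V) [DecidableRel G.Adj]
    (lam : ℝ) (A : Finset V) (v : V) (hv : v ∈ A) :
    hcZ G lam A = hcZ G lam (A.erase v)
      + lam * hcZ G lam (A \ insert v (G.neighborFinset v)) := by
  classical
  have h1 : ∀ s : Finset (Finset V), (∑ I ∈ s, (lam:ℝ) ^ I.card)
      = (∑ I ∈ s.filter (fun I => v ∉ I), lam ^ I.card)
        + ∑ I ∈ s.filter (fun I => v ∈ I), lam ^ I.card := by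
    intro s
    rw [← Finset.sum_filter_add_sum_filter_not s (fun I => v ∉ I) (fun I => lam ^ I.card)]
    congr 1
    apply Finset.sum_congr _ (fun _ _ => rfl)
    ext I
    simp [not_not]
  unfold hcZ
  rw [h1]
  congr 1
  · apply Finset.sum_congr _ (fun _ _ => rfl)
    rw [Finset.filter_filter]
    ext I
    simp only [mem_filter, mem_powerset, Finset.subset_erase]
    tauto
  · rw [Finset.mul_sum]
    apply Finset.sum_nbij' (fun I => I.erase v) (fun J => insert v J)
    · intro I hI
      simp only [Finset.mem_filter, Finset.mem_powerset] at hI ⊢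
      obtain ⟨⟨hIA, hind⟩, hvI⟩ := hI
      constructor
      · intro u hu
        simp only [Finset.mem_erase] at hu
        simp only [Finset.mem_sdiff, Finset.mem_insert, SimpleGraph.mem_neighborFinset]
        exact ⟨hIA hu.2, by push_neg; exact ⟨hu.1, hind v hvI u hu.2⟩⟩
      · intro u hu w hw
        exact hind u (Finset.mem_of_mem_erase hu) w (Finset.mem_of_mem_erase hw)
    · intro J hJ
      simp only [Finset.mem_filter, Finset.mem_powerset] at hJ ⊢
      obtain ⟨hJA, hind⟩ := hJ
      have hJ' : ∀ u ∈ J, u ≠ v ∧ ¬ G.Adj v u := by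
        intro u hu
        have := hJA hu
        simp only [Finset.mem_sdiff, Finset.mem_insert, SimpleGraph.mem_neighborFinset] at this
        push_neg at this
        exact this.2
      refine ⟨⟨?_, ?_⟩, Finset.mem_insert_self _ _⟩
      · intro u hu
        rcases Finset.mem_insert.1 hu with rfl | hu
        · exact hv
        · exact (Finset.mem_sdiff.1 (hJA hu)).1
      · intro u hu w hw
        rcases Finset.mem_insert.1 hu with hu1 | hu1
        · subst hu1
          rcases Finset.mem_insert.1 hw with hw1 | hw1
          · subst hw1; exact G.irrefl
          · exact (hJ' w hw1).2
        · rcases Finset.mem_insert.1 hw with hw1 | hw1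
          · intro h; rw [hw1] at h; exact (hJ' u hu1).2 h.symm
          · exact hind u hu1 w hw1
    · intro I hI
      simp only [Finset.mem_filter] at hI
      exact Finset.insert_erase hI.2
    · intro J hJ
      simp only [Finset.mem_filter, Finset.mem_powerset] at hJ
      have : v ∉ J := by
        intro hvJ
        have := hJ.1 hvJ
        simp at this
      exact Finset.erase_insert this
    · intro I hI
      simp only [Finset.mem_filter] at hI
      have : I.card = (I.erase v).card + 1 := by
        rw [Finset.card_erase_of_mem hI.2]
        have : 1 ≤ I.card := Finset.card_pos.2 ⟨v, hI.2⟩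
        omega
      rw [this, pow_succ]
      ring

lemma prod_telescope (f : ℕ → ℝ) (hf : ∀ j, 0 < f j) (n : ℕ) :
    ∏ i ∈ Finset.range n, f (i + 1) / f i = f n / f 0 := by
  induction n with
  | zero => simp [div_self (hf 0).ne']
  | succ n ih =>
    have h0 := (hf 0).ne'
    have hn := (hf n).ne'
    rw [Finset.prod_range_succ, ih]
    field_simp

/-- For a finite graph `G`, a vertex `v` with neighborhood
`N(v) = {v₁, …, v_k}` (enumerated by the list `l`), the hard-core marginal satisfies
`P_G(v ∉ I) = 1 / (1 + λ · ∏_{i=1}^k P_{G_{i-1}}(v_i ∉ I))`, where `G_{i-1}` is the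
subgraph induced by `V \ {v, v₁, …, v_{i-1}}`. -/
theorem hardcore_marginal_recursion {V : Type*} [Fintype V] [DecidableEq V]
    (G : SimpleGraph V) [DecidableRel G.Adj] (lam : ℝ) (hlam : 0 < lam)
    (v : V) (l : List V) (hl : l.Nodup) (hlN : l.toFinset = G.neighborFinset v) :
    hcPnot G lam Finset.univ v
      = (1 + lam * ∏ i : Fin l.length,
          hcPnot G lam (Finset.univ \ insert v ((l.take i).toFinset)) (l.get i))⁻¹ := by
  classical
  set f : ℕ → ℝ := fun j => hcZ G lam (Finset.univ \ insert v ((l.take j).toFinset)) with hf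
  have hfpos : ∀ j, 0 < f j := fun j => hcZ_pos G hlam _
  have hA0 : (Finset.univ \ insert v (([] : List V).toFinset) : Finset V)
      = Finset.univ.erase v := by
    ext x; simp
  have hstep : ∀ i : Fin l.length,
      hcPnot G lam (Finset.univ \ insert v ((l.take i).toFinset)) (l.get i)
      = f (i + 1) / f i := by
    intro i
    rw [hcPnot_eq]
    have hset : (Finset.univ \ insert v ((l.take i).toFinset)).erase (l.get i)
        = Finset.univ \ insert v ((l.take (i + 1)).toFinset) := by
      ext x
      simp only [List.take_succ, List.getElem?_eq_getElem i.isLt, Option.toList_some,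
        List.toFinset_append, List.toFinset_cons, List.toFinset_nil, LawfulSingleton.insert_empty_eq,
        Finset.mem_erase, Finset.mem_sdiff, Finset.mem_insert, Finset.mem_union,
        Finset.mem_singleton, Finset.mem_univ, true_and, List.mem_toFinset,
        List.get_eq_getElem]
      tauto
    rw [hset]
  have hprod : (∏ i : Fin l.length,
      hcPnot G lam (Finset.univ \ insert v ((l.take i).toFinset)) (l.get i))
      = f l.length / f 0 := by
    rw [Finset.prod_congr rfl (fun i _ => hstep i),
      Fin.prod_univ_eq_prod_range (fun j => f (j + 1) / f j) l.length]
    exact prod_telescope f hfpos l.length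
  have hAk : (Finset.univ \ insert v ((l.take l.length).toFinset) : Finset V)
      = Finset.univ \ insert v (G.neighborFinset v) := by
    rw [List.take_length, hlN]
  have hZ := hcZ_rec G lam Finset.univ v (Finset.mem_univ v)
  rw [hcPnot_eq, hprod]
  have hf0 : f 0 = hcZ G lam (Finset.univ.erase v) := by
    show hcZ G lam (Finset.univ \ insert v ((l.take 0).toFinset)) = _
    rw [List.take_zero, hA0]
  have hfk : f l.length = hcZ G lam (Finset.univ \ insert v (G.neighborFinset v)) := by
    show hcZ G lam (Finset.univ \ insert v ((l.take l.length).toFinset)) = _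
    rw [List.take_length, hlN]
  rw [← hf0, ← hfk] at hZ
  rw [← hf0, hZ]
  have h0 := (hfpos 0).ne'
  have hsum : (0:ℝ) < f 0 + lam * f l.length :=
    add_pos (hfpos 0) (mul_pos hlam (hfpos l.length))
  rw [show (1 + lam * (f l.length / f 0)) = (f 0 + lam * f l.length) / f 0 by
        field_simp,
    inv_div]
end

section
/- For a finite simple graph G, a vertex v, and the monomer-dimer Gibbs measure with activity λ, the probability that v is unmatched satisfies P_G(v ∉ M) = 1 / (1 + λ·Σ_{u ∈ N(v)} P_{G_0}(u ∉ M)), where G_0 is the subgraph induced by V \ {v} and the sum is 0 when v is isolated. -/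
open Finset

/-- Monomer-dimer partition function of the subgraph of `G` induced on the
vertex set `A`: sum of `lam ^ |M|` over matchings `M` all of whose endpoints lie in `A`. -/
noncomputable def mdZ {V : Type*} [Fintype V] [DecidableEq V] (G : SimpleGraph V)
    [DecidableRel G.Adj] (lam : ℝ) (A : Finset V) : ℝ :=
  ∑ M ∈ G.edgeFinset.powerset.filter
      (fun M => (∀ e ∈ M, ∀ x : V, x ∈ e → x ∈ A) ∧
        ∀ e ∈ M, ∀ f ∈ M, e ≠ f → ∀ x : V, x ∈ e → x ∉ f),
    lam ^ M.card


private def mSet {V : Type*} [Fintype V] [DecidableEq V] (G : SimpleGraph V)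
    [DecidableRel G.Adj] (A : Finset V) : Finset (Finset (Sym2 V)) :=
  G.edgeFinset.powerset.filter
      (fun M => (∀ e ∈ M, ∀ x : V, x ∈ e → x ∈ A) ∧
        ∀ e ∈ M, ∀ f ∈ M, e ≠ f → ∀ x : V, x ∈ e → x ∉ f)

private lemma mem_mSet {V : Type*} [Fintype V] [DecidableEq V] {G : SimpleGraph V}
    [DecidableRel G.Adj] {A : Finset V} {M : Finset (Sym2 V)} :
    M ∈ mSet G A ↔ M ⊆ G.edgeFinset ∧ (∀ e ∈ M, ∀ x : V, x ∈ e → x ∈ A) ∧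
        ∀ e ∈ M, ∀ f ∈ M, e ≠ f → ∀ x : V, x ∈ e → x ∉ f := by
  simp [mSet, Finset.mem_filter, Finset.mem_powerset, and_assoc]

private lemma mdZ_eq {V : Type*} [Fintype V] [DecidableEq V] (G : SimpleGraph V)
    [DecidableRel G.Adj] (lam : ℝ) (A : Finset V) :
    mdZ G lam A = ∑ M ∈ mSet G A, lam ^ M.card := rfl

private lemma mdZ_pos {V : Type*} [Fintype V] [DecidableEq V] (G : SimpleGraph V)
    [DecidableRel G.Adj] {lam : ℝ} (hlam : 0 < lam) (A : Finset V) :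
    0 < mdZ G lam A := by
  rw [mdZ_eq]
  refine Finset.sum_pos (fun M _ => pow_pos hlam _) ⟨∅, ?_⟩
  simp [mem_mSet]

private lemma num_set_eq {V : Type*} [Fintype V] [DecidableEq V] (G : SimpleGraph V)
    [DecidableRel G.Adj] (A : Finset V) (u : V) :
    G.edgeFinset.powerset.filter
      (fun M => (∀ e ∈ M, ∀ x : V, x ∈ e → x ∈ A) ∧
        (∀ e ∈ M, ∀ f ∈ M, e ≠ f → ∀ x : V, x ∈ e → x ∉ f) ∧ ∀ e ∈ M, u ∉ e)
      = mSet G (A.erase u) := by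
  ext M
  simp only [mem_mSet, Finset.mem_filter, Finset.mem_powerset, Finset.mem_erase, and_assoc]
  constructor
  · rintro ⟨hE, h1, h2, h3⟩
    exact ⟨hE, fun e he x hx => ⟨fun hxu => h3 e he (hxu ▸ hx), h1 e he x hx⟩, h2⟩
  · rintro ⟨hE, h1, h2⟩
    exact ⟨hE, fun e he x hx => (h1 e he x hx).2, h2,
      fun e he hu => (h1 e he u hu).1 rfl⟩

private lemma sum_Tu {V : Type*} [Fintype V] [DecidableEq V] (G : SimpleGraph V)
    [DecidableRel G.Adj] (lam : ℝ) {v u : V} (hadj : G.Adj v u) :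
    ∑ M ∈ (mSet G Finset.univ).filter (fun M => s(v, u) ∈ M), lam ^ M.card
      = lam * mdZ G lam ((Finset.univ.erase v).erase u) := by
  rw [mdZ_eq, Finset.mul_sum]
  refine Finset.sum_bij' (fun M _ => M.erase s(v, u)) (fun M _ => insert s(v, u) M)
    ?_ ?_ ?_ ?_ ?_
  · intro M hM
    rw [Finset.mem_filter, mem_mSet] at hM
    obtain ⟨⟨hE, _, h2⟩, he⟩ := hM
    rw [mem_mSet]
    refine ⟨(Finset.erase_subset _ _).trans hE, ?_, ?_⟩
    · intro e heM x hx
      rw [Finset.mem_erase] at heM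
      have hxe : x ∉ s(v, u) := h2 e heM.2 _ he heM.1 x hx
      rw [Sym2.mem_iff] at hxe
      push_neg at hxe
      simp [Finset.mem_erase, hxe.1, hxe.2]
    · intro e he' f hf' hef
      rw [Finset.mem_erase] at he' hf'
      exact h2 e he'.2 f hf'.2 hef
  · intro M hM
    rw [mem_mSet] at hM
    obtain ⟨hE, h1, h2⟩ := hM
    have hnv : ∀ e ∈ M, ∀ x : V, x ∈ e → x ≠ v ∧ x ≠ u := by
      intro e he x hx
      have := h1 e he x hx
      simp only [Finset.mem_erase, Finset.mem_univ, and_true] at this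
      exact ⟨this.2, this.1⟩
    rw [Finset.mem_filter, mem_mSet]
    refine ⟨⟨Finset.insert_subset (by simp [hadj]) hE, fun _ _ x _ => Finset.mem_univ x, ?_⟩,
      Finset.mem_insert_self _ _⟩
    intro e he f hf hef x hx hxf
    rcases Finset.mem_insert.mp he with rfl | heM
    · rcases Finset.mem_insert.mp hf with rfl | hfM
      · exact hef rfl
      · rcases Sym2.mem_iff.mp hx with rfl | rfl
        · exact (hnv f hfM x hxf).1 rfl
        · exact (hnv f hfM x hxf).2 rfl
    · rcases Finset.mem_insert.mp hf with rfl | hfM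
      · rcases Sym2.mem_iff.mp hxf with rfl | rfl
        · exact (hnv e heM x hx).1 rfl
        · exact (hnv e heM x hx).2 rfl
      · exact h2 e heM f hfM hef x hx hxf
  · intro M hM
    rw [Finset.mem_filter] at hM
    exact Finset.insert_erase hM.2
  · intro M hM
    rw [mem_mSet] at hM
    refine Finset.erase_insert ?_
    intro hmem
    have := hM.2.1 _ hmem v (by simp)
    simp at this
  · intro M hM
    rw [Finset.mem_filter] at hM
    rw [← Finset.card_erase_add_one hM.2, pow_succ]
    ring

private lemma mdZ_recursion {V : Type*} [Fintype V] [DecidableEq V] (G : SimpleGraph V)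
    [DecidableRel G.Adj] (lam : ℝ) (v : V) :
    mdZ G lam Finset.univ = mdZ G lam (Finset.univ.erase v)
      + lam * ∑ u ∈ G.neighborFinset v, mdZ G lam ((Finset.univ.erase v).erase u) := by
  classical
  rw [mdZ_eq G lam Finset.univ,
    ← Finset.sum_filter_add_sum_filter_not (mSet G Finset.univ) (fun M => ∀ e ∈ M, v ∉ e)]
  congr 1
  · rw [mdZ_eq]
    apply Finset.sum_congr _ (fun _ _ => rfl)
    ext M
    simp only [Finset.mem_filter, mem_mSet, Finset.mem_erase, Finset.mem_univ, and_true,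
      and_assoc]
    constructor
    · rintro ⟨hE, -, h2, h3⟩
      exact ⟨hE, fun e he x hx hxv => h3 e he (hxv ▸ hx), h2⟩
    · rintro ⟨hE, h1, h2⟩
      exact ⟨hE, fun e he x hx => trivial, h2, fun e he hv => h1 e he v hv rfl⟩
  · have hsplit : (mSet G Finset.univ).filter (fun M => ¬ ∀ e ∈ M, v ∉ e)
        = (G.neighborFinset v).biUnion
            (fun u => (mSet G Finset.univ).filter (fun M => s(v, u) ∈ M)) := by
      ext M
      simp only [Finset.mem_filter, Finset.mem_biUnion, SimpleGraph.mem_neighborFinset]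
      constructor
      · rintro ⟨hM, h⟩
        push_neg at h
        obtain ⟨e, he, hv⟩ := h
        obtain ⟨u, rfl⟩ := Sym2.mem_iff_exists.mp hv
        have hadj : G.Adj v u := by
          have := (mem_mSet.mp hM).1 he
          rwa [SimpleGraph.mem_edgeFinset, SimpleGraph.mem_edgeSet] at this
        exact ⟨u, hadj, hM, he⟩
      · rintro ⟨u, hadj, hM, he⟩
        refine ⟨hM, fun h => h _ he (by simp)⟩
    rw [hsplit, Finset.sum_biUnion, Finset.mul_sum]
    · exact Finset.sum_congr rfl (fun u hu =>
        sum_Tu G lam ((SimpleGraph.mem_neighborFinset _ _ _).mp hu))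
    · intro a ha b hb hab
      simp only [Function.onFun]
      rw [Finset.disjoint_left]
      rintro M hMa hMb
      rw [Finset.mem_filter] at hMa hMb
      have hne : s(v, a) ≠ s(v, b) := fun h => hab (Sym2.congr_right.mp h)
      exact (mem_mSet.mp hMa.1).2.2 _ hMa.2 _ hMb.2 hne v (by simp) (by simp)

/-- Probability under the monomer-dimer Gibbs measure on the subgraph induced on `A`
that the random matching does not cover the vertex `v`. -/
noncomputable def mdPnot {V : Type*} [Fintype V] [DecidableEq V] (G : SimpleGraph V)
    [DecidableRel G.Adj] (lam : ℝ) (A : Finset V) (v : V) : ℝ :=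
  (∑ M ∈ G.edgeFinset.powerset.filter
      (fun M => (∀ e ∈ M, ∀ x : V, x ∈ e → x ∈ A) ∧
        (∀ e ∈ M, ∀ f ∈ M, e ≠ f → ∀ x : V, x ∈ e → x ∉ f) ∧ ∀ e ∈ M, v ∉ e),
    lam ^ M.card) / mdZ G lam A

/-- For a finite graph `G` and vertex `v`, the monomer-dimer marginal
satisfies `P_G(v ∉ M) = 1 / (1 + λ · Σ_{u ∈ N(v)} P_{G₀}(u ∉ M))`, where `G₀` is the
subgraph induced by `V \ {v}`. -/
theorem monomer_dimer_marginal_recursion {V : Type*} [Fintype V] [DecidableEq V]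
    (G : SimpleGraph V) [DecidableRel G.Adj] (lam : ℝ) (hlam : 0 < lam) (v : V) :
    mdPnot G lam Finset.univ v
      = (1 + lam * ∑ u ∈ G.neighborFinset v, mdPnot G lam (Finset.univ.erase v) u)⁻¹ := by
  classical
  have key : ∀ (A : Finset V) (u : V),
      mdPnot G lam A u = mdZ G lam (A.erase u) / mdZ G lam A := by
    intro A u
    unfold mdPnot
    rw [num_set_eq, ← mdZ_eq]
  simp only [key]
  have h0 : 0 < mdZ G lam (Finset.univ.erase v) := mdZ_pos G hlam _
  have h1 : 0 < mdZ G lam (Finset.univ : Finset V) := mdZ_pos G hlam _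
  rw [← Finset.sum_div, mdZ_recursion G lam v]
  have hS : 1 + lam * ((∑ u ∈ G.neighborFinset v,
        mdZ G lam ((Finset.univ.erase v).erase u)) / mdZ G lam (Finset.univ.erase v))
      = (mdZ G lam (Finset.univ.erase v) + lam * ∑ u ∈ G.neighborFinset v,
          mdZ G lam ((Finset.univ.erase v).erase u)) / mdZ G lam (Finset.univ.erase v) := by
    field_simp
  rw [hS, inv_div]
end

section
/- For the hard-core model on a finite graph G of maximum degree Δ ≥ 3 with activity λ < (Δ−1)^{Δ−1}/(Δ−2)^{Δ}, there exist constants C > 0 and 0 < ρ < 1 depending only on λ and Δ such that for every vertex v and every t ∈ ℕ, |log Φ_G(v,t) − log Ψ_G(v,t)| ≤ C·ρ^t, where Φ and Ψ are the recursive upper/lower bound functions defined by Φ_Ĝ(v,0)=1, Ψ_Ĝ(v,0)=0, and for t>0 both satisfy F_Ĝ(v,t) = (1 + λ·∏_i F_{Ĝ_{i-1}}(v_i,t−1))^{-1} over the neighbors v_1,...,v_k of v with sequential vertex deletions. -/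
open Finset

/-- Sequential product `f A u₁ · f (A \ {u₁}) u₂ · …` along a list of vertices. -/
noncomputable def seqProd {V : Type*} [DecidableEq V] (f : Finset V → V → ℝ) :
    Finset V → List V → ℝ
  | _, [] => 1
  | A, u :: rest => f A u * seqProd f (A.erase u) rest

/-- The recursively defined quantity `Φ` (for `base = 1`) resp. `Ψ` (for `base = 0`) of
the hard-core computation-tree recursion: `F(0, A, v) = base`; for `t > 0`,
`F(t, A, v) = 1/(1+λ)` if `v` has no neighbors in `A`, and otherwise
`F(t, A, v) = (1 + λ · ∏ᵢ F(t-1, Aᵢ₋₁, vᵢ))⁻¹` over the neighbors `v₁, …, v_k` of `v`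
in `A`, with sequential vertex deletions. -/
noncomputable def hcRec {V : Type*} [Fintype V] [LinearOrder V] (G : SimpleGraph V)
    [DecidableRel G.Adj] (lam base : ℝ) : ℕ → Finset V → V → ℝ
  | 0, _, _ => base
  | t + 1, A, v =>
    if (G.neighborFinset v ∩ A.erase v) = ∅ then (1 + lam)⁻¹
    else (1 + lam * seqProd (hcRec G lam base t) (A.erase v)
            ((G.neighborFinset v ∩ A.erase v).sort (· ≤ ·)))⁻¹


namespace HC
open Real



/-- The potential function `pot x = artanh (√(1-x))`, written with `log`. -/
noncomputable def pot (x : ℝ) : ℝ := Real.log ((1 + Real.sqrt (1 - x)) / Real.sqrt x)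

lemma tanh_lt_one (x : ℝ) : Real.tanh x < 1 := by
  rw [Real.tanh_eq_sinh_div_cosh, div_lt_one (Real.cosh_pos x)]
  exact Real.sinh_lt_cosh x

lemma neg_one_lt_tanh (x : ℝ) : -1 < Real.tanh x := by
  have := tanh_lt_one (-x)
  rw [Real.tanh_neg] at this
  linarith

lemma tanh_sq_lt_one (x : ℝ) : Real.tanh x ^ 2 < 1 := by
  have h1 := tanh_lt_one x
  have h2 := neg_one_lt_tanh x
  nlinarith

lemma tanh_nonneg {x : ℝ} (hx : 0 ≤ x) : 0 ≤ Real.tanh x := by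
  rw [Real.tanh_eq_sinh_div_cosh]
  exact div_nonneg (Real.sinh_nonneg_iff.2 hx) (Real.cosh_pos x).le

lemma hasDerivAt_tanh (x : ℝ) : HasDerivAt Real.tanh (1 - Real.tanh x ^ 2) x := by
  have h := (Real.hasDerivAt_sinh x).div (Real.hasDerivAt_cosh x) (Real.cosh_pos x).ne'
  have heq : (Real.cosh x * Real.cosh x - Real.sinh x * Real.sinh x) / Real.cosh x ^ 2
      = 1 - Real.tanh x ^ 2 := by
    have hc := Real.cosh_sq_sub_sinh_sq x
    have hcp := (Real.cosh_pos x).ne'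
    rw [Real.tanh_eq_sinh_div_cosh]
    field_simp
  have h2 : HasDerivAt (fun y => Real.sinh y / Real.cosh y) (1 - Real.tanh x ^ 2) x := heq ▸ h
  exact h2.congr_of_eventuallyEq
    (Filter.Eventually.of_forall fun y => Real.tanh_eq_sinh_div_cosh y)

/-- `tanh (pot x) = √(1-x)` for `0 < x ≤ 1`. -/
lemma tanh_pot {x : ℝ} (hx0 : 0 < x) (hx1 : x ≤ 1) :
    Real.tanh (pot x) = Real.sqrt (1 - x) := by
  set u := Real.sqrt (1 - x) with hu
  have hu0 : 0 ≤ u := Real.sqrt_nonneg _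
  have hu2 : u ^ 2 = 1 - x := Real.sq_sqrt (by linarith)
  have hsx : 0 < Real.sqrt x := Real.sqrt_pos.2 hx0
  have hsx2 : Real.sqrt x ^ 2 = x := Real.sq_sqrt hx0.le
  have harg : 0 < (1 + u) / Real.sqrt x := by positivity
  have hexp : Real.exp (pot x) = (1 + u) / Real.sqrt x := Real.exp_log harg
  have hexpneg : Real.exp (-pot x) = Real.sqrt x / (1 + u) := by
    rw [Real.exp_neg, hexp]
    rw [inv_div]
  rw [Real.tanh_eq_sinh_div_cosh, Real.sinh_eq, Real.cosh_eq, hexp, hexpneg]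
  have h1u : (0:ℝ) < 1 + u := by linarith
  field_simp
  nlinarith [hsx2, hu2]

lemma one_sub_tanh_pot_sq {x : ℝ} (hx0 : 0 < x) (hx1 : x ≤ 1) :
    1 - Real.tanh (pot x) ^ 2 = x := by
  rw [tanh_pot hx0 hx1, Real.sq_sqrt (by linarith)]
  ring

lemma pot_nonneg {x : ℝ} (hx0 : 0 < x) (hx1 : x ≤ 1) : 0 ≤ pot x := by
  apply Real.log_nonneg
  rw [le_div_iff₀ (Real.sqrt_pos.2 hx0), one_mul]
  have h1 : Real.sqrt x ≤ 1 := by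
    rw [show (1:ℝ) = Real.sqrt 1 by simp]
    exact Real.sqrt_le_sqrt hx1
  have := Real.sqrt_nonneg (1 - x)
  linarith

lemma pot_one : pot 1 = 0 := by simp [pot]

lemma pot_anti {x y : ℝ} (hx0 : 0 < x) (hxy : x ≤ y) (hy1 : y ≤ 1) : pot y ≤ pot x := by
  have hy0 : 0 < y := lt_of_lt_of_le hx0 hxy
  apply Real.log_le_log (by positivity)
  apply div_le_div₀ (by positivity) _ (Real.sqrt_pos.2 hx0) (Real.sqrt_le_sqrt hxy)
  have : Real.sqrt (1 - y) ≤ Real.sqrt (1 - x) := Real.sqrt_le_sqrt (by linarith)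
  linarith

/-- `cosh (pot x) = 1/√x`. -/
lemma cosh_pot {x : ℝ} (hx0 : 0 < x) (hx1 : x ≤ 1) :
    Real.cosh (pot x) = 1 / Real.sqrt x := by
  set u := Real.sqrt (1 - x) with hu
  have hu0 : 0 ≤ u := Real.sqrt_nonneg _
  have hu2 : u ^ 2 = 1 - x := Real.sq_sqrt (by linarith)
  have hsx : 0 < Real.sqrt x := Real.sqrt_pos.2 hx0
  have hsx2 : Real.sqrt x ^ 2 = x := Real.sq_sqrt hx0.le
  have harg : 0 < (1 + u) / Real.sqrt x := by positivity
  have hexp : Real.exp (pot x) = (1 + u) / Real.sqrt x := Real.exp_log harg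
  have hexpneg : Real.exp (-pot x) = Real.sqrt x / (1 + u) := by
    rw [Real.exp_neg, hexp, inv_div]
  rw [Real.cosh_eq, hexp, hexpneg]
  have h1u : (0:ℝ) < 1 + u := by linarith
  field_simp
  nlinarith [hsx2, hu2]

/-- `log x = -2 log (cosh (pot x))`. -/
lemma log_eq_pot {x : ℝ} (hx0 : 0 < x) (hx1 : x ≤ 1) :
    Real.log x = -2 * Real.log (Real.cosh (pot x)) := by
  rw [cosh_pot hx0 hx1, one_div, Real.log_inv, Real.log_sqrt hx0.le]
  ring

/-- The function `gg W = log (√(1+W) + √W)`, equal to `pot ((1+W)⁻¹)`. -/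
lemma gg_eq_pot {W : ℝ} (hW : 0 ≤ W) :
    Real.log (Real.sqrt (1 + W) + Real.sqrt W) = pot ((1 + W)⁻¹) := by
  have h1W : (0:ℝ) < 1 + W := by linarith
  have h1 : 1 - (1 + W)⁻¹ = W / (1 + W) := by field_simp; ring
  have h2 : Real.sqrt (W / (1 + W)) = Real.sqrt W / Real.sqrt (1 + W) :=
    Real.sqrt_div hW _
  have h3 : Real.sqrt ((1 + W)⁻¹) = (Real.sqrt (1 + W))⁻¹ := Real.sqrt_inv _
  have hs : 0 < Real.sqrt (1 + W) := Real.sqrt_pos.2 h1W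
  rw [pot, h1, h2, h3]
  congr 1
  field_simp




/-- **AM-GM**: `∏ z ≤ ((∑ z) / n)^n` for nonneg `z`. -/
lemma amgm {n : ℕ} (hn : 0 < n) (z : Fin n → ℝ) (hz : ∀ i, 0 ≤ z i) :
    ∏ i, z i ≤ ((∑ i, z i) / n) ^ n := by
  have hw : ∀ i ∈ (univ : Finset (Fin n)), (0:ℝ) ≤ (n:ℝ)⁻¹ := fun i _ => by positivity
  have hw' : ∑ _i ∈ (univ : Finset (Fin n)), (n:ℝ)⁻¹ = 1 := by
    simp [Finset.card_univ]
    field_simp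
  have h := Real.geom_mean_le_arith_mean_weighted univ (fun _ => (n:ℝ)⁻¹) z hw hw'
    (fun i _ => hz i)
  have hprod : ∏ i, z i ^ ((n:ℝ)⁻¹) = (∏ i, z i) ^ ((n:ℝ)⁻¹) := by
    rw [← Real.finset_prod_rpow _ _ (fun i _ => hz i)]
  rw [hprod] at h
  have hsum : ∑ i, (n:ℝ)⁻¹ * z i = (∑ i, z i) / n := by
    rw [← Finset.mul_sum]
    ring
  rw [hsum] at h
  have hP : (0:ℝ) ≤ ∏ i, z i := Finset.prod_nonneg fun i _ => hz i
  have h2 := Real.rpow_le_rpow (Real.rpow_nonneg hP _) h (by positivity : (0:ℝ) ≤ (n:ℝ))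
  rwa [← Real.rpow_mul hP, inv_mul_cancel₀ (by positivity : (n:ℝ) ≠ 0), Real.rpow_one,
    Real.rpow_natCast] at h2

/-- Main polynomial inequality, exact-dimension case. -/
lemma maineq_exact (d : ℕ) (hd : 2 ≤ d) (t : Fin d → ℝ) (h0 : ∀ i, 0 ≤ t i)
    (h1 : ∀ i, t i ≤ 1) :
    ((∑ i, t i) ^ 2 - 1) * ∏ i, (1 - t i ^ 2) ≤ ((d:ℝ) - 1) ^ (d+1) / (d:ℝ) ^ d := by
  have hd1 : (1:ℝ) ≤ (d:ℝ) - 1 := by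
    have : (2:ℝ) ≤ (d:ℝ) := by exact_mod_cast hd
    linarith
  have hdpos : (0:ℝ) < (d:ℝ) := by positivity
  have hQ0 : (0:ℝ) ≤ ∏ i, (1 - t i ^ 2) :=
    Finset.prod_nonneg fun i _ => by nlinarith [h0 i, h1 i]
  have hRHS : (0:ℝ) ≤ ((d:ℝ) - 1) ^ (d+1) / (d:ℝ) ^ d := by positivity
  have hCS : (∑ i, t i) ^ 2 ≤ (d:ℝ) * ∑ i, t i ^ 2 := by
    have := sq_sum_le_card_mul_sum_sq (s := (univ : Finset (Fin d))) (f := t)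
    simpa [Finset.card_univ] using this
  by_cases hb : (d:ℝ) * ∑ i, t i ^ 2 ≤ 1
  · have : (∑ i, t i) ^ 2 - 1 ≤ 0 := by linarith
    nlinarith
  push_neg at hb
  set b : ℝ := (d:ℝ) * ∑ i, t i ^ 2 - 1 with hbdef
  have hbpos : 0 < b := by simp only [hbdef]; linarith
  -- AM-GM on the d+1 numbers `d*(1 - t i ^2)` and `b`
  set z : Fin (d+1) → ℝ := fun i => if h : (i:ℕ) < d then (d:ℝ) * (1 - t ⟨i, h⟩ ^ 2) else b
    with hzdef
  have hz0 : ∀ i, 0 ≤ z i := by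
    intro i
    simp only [hzdef]
    split
    · next h =>
        have h01 : (0:ℝ) ≤ 1 - t ⟨i, h⟩ ^ 2 := by nlinarith [h0 ⟨i, h⟩, h1 ⟨i, h⟩]
        exact mul_nonneg hdpos.le h01
    · exact hbpos.le
  have hsum : ∑ i, z i = (d:ℝ)^2 - 1 := by
    rw [Fin.sum_univ_castSucc]
    have h1' : ∀ i : Fin d, z i.castSucc = (d:ℝ) * (1 - t i ^ 2) := by
      intro i
      simp only [hzdef, Fin.coe_castSucc]
      rw [dif_pos i.isLt]
    have h2' : z (Fin.last d) = b := by
      simp only [hzdef, Fin.val_last]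
      rw [dif_neg (lt_irrefl d)]
    have hsub : ∑ i : Fin d, ((1:ℝ) - t i ^ 2) = (d:ℝ) - ∑ i, t i ^ 2 := by
      rw [Finset.sum_sub_distrib]
      simp [Finset.card_univ]
    rw [h2', Finset.sum_congr rfl (fun i _ => h1' i), ← Finset.mul_sum, hsub, hbdef]
    ring
  have hprodz : ∏ i, z i = (d:ℝ)^d * (∏ i, (1 - t i ^ 2)) * b := by
    rw [Fin.prod_univ_castSucc]
    have h1' : ∀ i : Fin d, z i.castSucc = (d:ℝ) * (1 - t i ^ 2) := by
      intro i
      simp only [hzdef, Fin.coe_castSucc]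
      rw [dif_pos i.isLt]
    have h2' : z (Fin.last d) = b := by
      simp only [hzdef, Fin.val_last]
      rw [dif_neg (lt_irrefl d)]
    rw [h2', Finset.prod_congr rfl (fun i _ => h1' i), Finset.prod_mul_distrib,
      Finset.prod_const]
    rw [Finset.card_univ, Fintype.card_fin]
    try ring
  have hAM := amgm (Nat.succ_pos d) z hz0
  rw [hsum, hprodz] at hAM
  have hcast : ((d:ℝ)^2 - 1) / ((d:ℕ)+1 : ℕ) = (d:ℝ) - 1 := by
    push_cast
    have : ((d:ℝ)+1) ≠ 0 := by positivity
    field_simp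
    ring
  rw [show (((d:ℕ)+1 : ℕ):ℝ) = (d:ℝ)+1 by push_cast; ring] at hAM
  have hAM2 : (d:ℝ)^d * (∏ i, (1 - t i ^ 2)) * b ≤ ((d:ℝ) - 1)^(d+1) := by
    calc (d:ℝ)^d * (∏ i, (1 - t i ^ 2)) * b ≤ (((d:ℝ)^2 - 1) / ((d:ℝ)+1)) ^ (d+1) := hAM
    _ = ((d:ℝ) - 1)^(d+1) := by
        congr 1
        have : ((d:ℝ)+1) ≠ 0 := by positivity
        field_simp
        ring
  -- conclude
  have hstep : ((∑ i, t i) ^ 2 - 1) * ∏ i, (1 - t i ^ 2) ≤ b * ∏ i, (1 - t i ^ 2) := by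
    apply mul_le_mul_of_nonneg_right _ hQ0
    simp only [hbdef]; linarith
  have hdd : (0:ℝ) < (d:ℝ)^d := by positivity
  calc ((∑ i, t i) ^ 2 - 1) * ∏ i, (1 - t i ^ 2) ≤ b * ∏ i, (1 - t i ^ 2) := hstep
    _ ≤ ((d:ℝ) - 1)^(d+1) / (d:ℝ)^d := by
        rw [le_div_iff₀ hdd]
        nlinarith [hAM2]


/-- Padded version of the main inequality: any number `n ≤ d` of variables. -/
lemma maineq (d n : ℕ) (hd : 2 ≤ d) (hnd : n ≤ d) (t : Fin n → ℝ) (h0 : ∀ i, 0 ≤ t i)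
    (h1 : ∀ i, t i ≤ 1) :
    ((∑ i, t i) ^ 2 - 1) * ∏ i, (1 - t i ^ 2) ≤ ((d:ℝ) - 1) ^ (d+1) / (d:ℝ) ^ d := by
  classical
  set F : ℕ → ℝ := fun m => if h : m < n then t ⟨m, h⟩ else 0 with hF
  have hFout : ∀ m ∈ Finset.range d, m ∉ Finset.range n → F m = 0 := by
    intro m _ hm
    have : ¬ m < n := fun hc => hm (Finset.mem_range.2 hc)
    simp [hF, this]
  have hFout' : ∀ m ∈ Finset.range d, m ∉ Finset.range n → 1 - F m ^ 2 = 1 := by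
    intro m h1m h2m
    rw [hFout m h1m h2m]
    ring
  have hsum : ∑ i : Fin d, F i.val = ∑ i : Fin n, t i := by
    rw [Fin.sum_univ_eq_sum_range F d,
      ← Finset.sum_subset (Finset.range_subset_range.2 hnd) hFout,
      ← Fin.sum_univ_eq_sum_range F n]
    apply Finset.sum_congr rfl
    intro i _
    simp [hF, i.isLt]
  have hprod : ∏ i : Fin d, (1 - F i.val ^ 2) = ∏ i : Fin n, (1 - t i ^ 2) := by
    rw [Fin.prod_univ_eq_prod_range (fun m => 1 - F m ^ 2) d,
      ← Finset.prod_subset (Finset.range_subset_range.2 hnd) hFout',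
      ← Fin.prod_univ_eq_prod_range (fun m => 1 - F m ^ 2) n]
    apply Finset.prod_congr rfl
    intro i _
    simp [hF, i.isLt]
  have h0' : ∀ i : Fin d, 0 ≤ F i.val := by
    intro i
    simp only [hF]
    split
    · exact h0 _
    · exact le_refl 0
  have h1' : ∀ i : Fin d, F i.val ≤ 1 := by
    intro i
    simp only [hF]
    split
    · exact h1 _
    · exact zero_le_one
  have := maineq_exact d hd (fun i => F i.val) h0' h1'
  rwa [hsum, hprod] at this

/-- The key contraction-rate bound. -/
lemma key {lam : ℝ} (hlam : 0 < lam) (d n : ℕ) (hd : 2 ≤ d) (hnd : n ≤ d)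
    (hr : lam * ((d:ℝ) - 1) ^ (d+1) / (d:ℝ) ^ d < 1)
    (t : Fin n → ℝ) (h0 : ∀ i, 0 ≤ t i) (h1 : ∀ i, t i ≤ 1) :
    (∑ i, t i) * Real.sqrt ((lam * ∏ i, (1 - t i ^ 2)) / (1 + lam * ∏ i, (1 - t i ^ 2)))
      ≤ Real.sqrt (1 - (1 - lam * ((d:ℝ) - 1) ^ (d+1) / (d:ℝ) ^ d) / (1 + lam)) := by
  set Q : ℝ := ∏ i, (1 - t i ^ 2) with hQ
  set σ : ℝ := ∑ i, t i with hσ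
  set r : ℝ := lam * ((d:ℝ) - 1) ^ (d+1) / (d:ℝ) ^ d with hrdef
  have hQ0 : 0 ≤ Q := Finset.prod_nonneg fun i _ => by nlinarith [h0 i, h1 i]
  have hQ1 : Q ≤ 1 := Finset.prod_le_one (fun i _ => by nlinarith [h0 i, h1 i])
    (fun i _ => by nlinarith [h0 i])
  have hσ0 : 0 ≤ σ := Finset.sum_nonneg fun i _ => h0 i
  have h1Q : (0:ℝ) < 1 + lam * Q := by nlinarith
  have hy0 : (0:ℝ) ≤ lam * Q / (1 + lam * Q) := by positivity
  have hr0 : 0 ≤ r := by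
    have : (1:ℝ) ≤ (d:ℝ) - 1 := by
      have : (2:ℝ) ≤ (d:ℝ) := by exact_mod_cast hd
      linarith
    rw [hrdef]
    positivity
  -- main bound : σ² * (lam Q/(1+lam Q)) ≤ 1 - (1-r)/(1+lam)
  have hmain : σ ^ 2 * (lam * Q / (1 + lam * Q)) ≤ 1 - (1 - r) / (1 + lam) := by
    have hme := maineq d n hd hnd t h0 h1
    have h2 : lam * ((σ ^ 2 - 1) * Q) ≤ r := by
      rw [hrdef]
      rw [mul_div_assoc]
      calc lam * ((σ ^ 2 - 1) * Q) ≤ lam * (((d:ℝ) - 1) ^ (d+1) / (d:ℝ) ^ d) := by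
            exact mul_le_mul_of_nonneg_left hme hlam.le
        _ = lam * (((d:ℝ) - 1) ^ (d+1) / (d:ℝ) ^ d) := rfl
    have h3 : σ ^ 2 * (lam * Q) ≤ lam * Q + r := by nlinarith
    have h4 : σ ^ 2 * (lam * Q / (1 + lam * Q)) ≤ (lam * Q + r) / (1 + lam * Q) := by
      rw [mul_div_assoc']
      exact (div_le_div_iff_of_pos_right h1Q).2 h3
    have h5 : (lam * Q + r) / (1 + lam * Q) = 1 - (1 - r) / (1 + lam * Q) := by
      field_simp
      ring
    have h6 : (1 - r) / (1 + lam) ≤ (1 - r) / (1 + lam * Q) := by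
      apply div_le_div_of_nonneg_left (by linarith) h1Q (by nlinarith)
    calc σ ^ 2 * (lam * Q / (1 + lam * Q)) ≤ (lam * Q + r) / (1 + lam * Q) := h4
      _ = 1 - (1 - r) / (1 + lam * Q) := h5
      _ ≤ 1 - (1 - r) / (1 + lam) := by linarith
  -- convert to square roots
  have hLHS0 : 0 ≤ σ * Real.sqrt (lam * Q / (1 + lam * Q)) := by positivity
  have hsq : (σ * Real.sqrt (lam * Q / (1 + lam * Q))) ^ 2 ≤
      1 - (1 - r) / (1 + lam) := by
    rw [mul_pow, Real.sq_sqrt hy0]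
    exact hmain
  calc σ * Real.sqrt (lam * Q / (1 + lam * Q))
      = Real.sqrt ((σ * Real.sqrt (lam * Q / (1 + lam * Q))) ^ 2) :=
        (Real.sqrt_sq hLHS0).symm
    _ ≤ Real.sqrt (1 - (1 - r) / (1 + lam)) := Real.sqrt_le_sqrt hsq



set_option maxHeartbeats 1000000 in
/-- The contraction step along a linear path in potential space. -/
lemma contr {lam : ℝ} (hlam : 0 < lam) {n : ℕ} (B D : ℝ) (hB0 : 0 ≤ B) (hD0 : 0 ≤ D)
    (p q : Fin n → ℝ)
    (hp1 : ∀ i, (1 + lam)⁻¹ ≤ p i) (hp2 : ∀ i, p i ≤ 1)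
    (hq1 : ∀ i, (1 + lam)⁻¹ ≤ q i) (hq2 : ∀ i, q i ≤ 1)
    (hpq : ∀ i, |pot (p i) - pot (q i)| ≤ D)
    (hkey : ∀ c : Fin n → ℝ, (∀ i, 0 ≤ c i) →
      (∑ i, Real.tanh (c i)) * Real.sqrt ((lam * ∏ i, (1 - Real.tanh (c i) ^ 2)) /
        (1 + lam * ∏ i, (1 - Real.tanh (c i) ^ 2))) ≤ B) :
    |pot (1 + lam * ∏ i, p i)⁻¹ - pot (1 + lam * ∏ i, q i)⁻¹| ≤ B * D := by
  classical
  have h1lam : (0:ℝ) < 1 + lam := by linarith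
  have hinv : (0:ℝ) < (1 + lam)⁻¹ := by positivity
  have hppos : ∀ i, 0 < p i := fun i => lt_of_lt_of_le hinv (hp1 i)
  have hqpos : ∀ i, 0 < q i := fun i => lt_of_lt_of_le hinv (hq1 i)
  set u : Fin n → ℝ := fun i => pot (p i) with hu
  set v : Fin n → ℝ := fun i => pot (q i) with hv
  have hu0 : ∀ i, 0 ≤ u i := fun i => pot_nonneg (hppos i) (hp2 i)
  have hv0 : ∀ i, 0 ≤ v i := fun i => pot_nonneg (hqpos i) (hq2 i)
  set c : ℝ → Fin n → ℝ := fun θ i => u i + θ * (v i - u i) with hc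
  set P : ℝ → ℝ := fun θ => ∏ i, (1 - Real.tanh (c θ i) ^ 2) with hP
  set W : ℝ → ℝ := fun θ => lam * P θ with hW
  have hPpos : ∀ θ, 0 < P θ :=
    fun θ => Finset.prod_pos fun i _ => by nlinarith [tanh_sq_lt_one (c θ i)]
  have hWpos : ∀ θ, 0 < W θ := fun θ => mul_pos hlam (hPpos θ)
  set S : ℝ → ℝ := fun θ => ∑ i, Real.tanh (c θ i) * (v i - u i) with hS
  set h : ℝ → ℝ := fun θ => Real.log (Real.sqrt (1 + W θ) + Real.sqrt (W θ)) with hh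
  set Sder : ℝ → ℝ := fun θ => -(Real.sqrt (W θ / (1 + W θ)) * S θ) with hSder
  -- endpoint values
  have hP0 : P 0 = ∏ i, p i := by
    apply Finset.prod_congr rfl
    intro i _
    have : c 0 i = u i := by simp [hc]
    rw [this, hu]
    exact one_sub_tanh_pot_sq (hppos i) (hp2 i)
  have hP1 : P 1 = ∏ i, q i := by
    apply Finset.prod_congr rfl
    intro i _
    have : c 1 i = v i := by simp [hc]
    rw [this, hv]
    exact one_sub_tanh_pot_sq (hqpos i) (hq2 i)
  have hprodp0 : (0:ℝ) ≤ ∏ i, p i := Finset.prod_nonneg fun i _ => (hppos i).le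
  have hprodq0 : (0:ℝ) ≤ ∏ i, q i := Finset.prod_nonneg fun i _ => (hqpos i).le
  have h0val : h 0 = pot (1 + lam * ∏ i, p i)⁻¹ := by
    simp only [hh, hW, hP0]
    exact gg_eq_pot (by positivity)
  have h1val : h 1 = pot (1 + lam * ∏ i, q i)⁻¹ := by
    simp only [hh, hW, hP1]
    exact gg_eq_pot (by positivity)
  -- the derivative
  have hderiv : ∀ θ : ℝ, HasDerivAt h (Sder θ) θ := by
    intro θ
    have hcD : ∀ i : Fin n, HasDerivAt (fun θ' => c θ' i) (v i - u i) θ := by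
      intro i
      have : HasDerivAt (fun θ' : ℝ => θ' * (v i - u i)) (1 * (v i - u i)) θ :=
        (hasDerivAt_id θ).mul_const _
      simpa [hc] using this.const_add (u i)
    have htanhD : ∀ i : Fin n, HasDerivAt (fun θ' => Real.tanh (c θ' i))
        ((1 - Real.tanh (c θ i) ^ 2) * (v i - u i)) θ := by
      intro i
      exact (hasDerivAt_tanh (c θ i)).comp θ (hcD i)
    have hfD : ∀ i : Fin n, HasDerivAt (fun θ' => 1 - Real.tanh (c θ' i) ^ 2)
        (-(2 * Real.tanh (c θ i) * ((1 - Real.tanh (c θ i) ^ 2) * (v i - u i)))) θ := by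
      intro i
      have := ((htanhD i).pow 2).const_sub 1
      simpa using this
    have hprodD := HasDerivAt.finset_prod (u := (univ : Finset (Fin n)))
      (f := fun i θ' => 1 - Real.tanh (c θ' i) ^ 2)
      (f' := fun i => -(2 * Real.tanh (c θ i) * ((1 - Real.tanh (c θ i) ^ 2) * (v i - u i))))
      (fun i _ => hfD i)
    -- simplify the derivative of the product
    have hsimp : (∑ i, (∏ j ∈ univ.erase i, (1 - Real.tanh (c θ j) ^ 2)) •
        (-(2 * Real.tanh (c θ i) * ((1 - Real.tanh (c θ i) ^ 2) * (v i - u i)))))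
        = -2 * P θ * S θ := by
      simp only [hS]
      rw [Finset.mul_sum]
      apply Finset.sum_congr rfl
      intro i _
      have hpe : (∏ j ∈ univ.erase i, (1 - Real.tanh (c θ j) ^ 2)) *
          (1 - Real.tanh (c θ i) ^ 2) = P θ := by
        simp only [hP]
        exact Finset.prod_erase_mul univ _ (mem_univ i)
      rw [smul_eq_mul]
      have hring : (∏ j ∈ univ.erase i, (1 - Real.tanh (c θ j) ^ 2)) *
          -(2 * Real.tanh (c θ i) * ((1 - Real.tanh (c θ i) ^ 2) * (v i - u i)))
          = -2 * ((∏ j ∈ univ.erase i, (1 - Real.tanh (c θ j) ^ 2)) *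
            (1 - Real.tanh (c θ i) ^ 2)) * (Real.tanh (c θ i) * (v i - u i)) := by
        ring
      rw [hring, hpe]
    have hPD : HasDerivAt P (-2 * P θ * S θ) θ := by
      rw [← hsimp]
      have hPeq : P = ∏ i, fun θ' => 1 - Real.tanh (c θ' i) ^ 2 := by
        ext θ'
        simp only [hP, Finset.prod_apply]
      rw [hPeq]
      exact hprodD
    have hWD : HasDerivAt W (lam * (-2 * P θ * S θ)) θ := hPD.const_mul lam
    have h1WD : HasDerivAt (fun θ' => 1 + W θ') (lam * (-2 * P θ * S θ)) θ :=
      hWD.const_add 1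
    have h1Wpos : (0:ℝ) < 1 + W θ := by have := hWpos θ; linarith
    have hs1 : HasDerivAt (fun θ' => Real.sqrt (1 + W θ'))
        ((lam * (-2 * P θ * S θ)) / (2 * Real.sqrt (1 + W θ))) θ :=
      h1WD.sqrt h1Wpos.ne'
    have hs2 : HasDerivAt (fun θ' => Real.sqrt (W θ'))
        ((lam * (-2 * P θ * S θ)) / (2 * Real.sqrt (W θ))) θ :=
      hWD.sqrt (hWpos θ).ne'
    have hsum := hs1.add hs2
    have hpos : Real.sqrt (1 + W θ) + Real.sqrt (W θ) ≠ 0 := by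
      have := Real.sqrt_pos.2 (hWpos θ)
      have := Real.sqrt_nonneg (1 + W θ)
      positivity
    have hlog := hsum.log hpos
    -- identify the derivative value
    have heq : ((lam * (-2 * P θ * S θ)) / (2 * Real.sqrt (1 + W θ)) +
        (lam * (-2 * P θ * S θ)) / (2 * Real.sqrt (W θ))) /
        (Real.sqrt (1 + W θ) + Real.sqrt (W θ)) = Sder θ := by
      have hW1 : (0:ℝ) < 1 + W θ := h1Wpos
      set a := Real.sqrt (1 + W θ) with ha
      set b := Real.sqrt (W θ) with hb
      have hapos : 0 < a := Real.sqrt_pos.2 hW1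
      have hbpos : 0 < b := Real.sqrt_pos.2 (hWpos θ)
      have ha2 : a ^ 2 = 1 + W θ := Real.sq_sqrt hW1.le
      have hb2 : b ^ 2 = W θ := Real.sq_sqrt (hWpos θ).le
      have hdiv : Real.sqrt (W θ / (1 + W θ)) = b / a := by
        rw [Real.sqrt_div (hWpos θ).le]
      have hlamP : lam * (-2 * P θ * S θ) = -2 * b ^ 2 * S θ := by
        rw [hb2]
        simp only [hW]
        ring
      simp only [hSder]
      rw [hdiv, hlamP]
      field_simp
      nlinarith [hb2, sq_nonneg (a - b), sq_nonneg (a + b)]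
    simp only [Pi.add_apply] at hlog
    rw [heq] at hlog
    exact hlog
  -- bound on the derivative on [0,1]
  have hbound : ∀ θ ∈ Set.Ico (0:ℝ) 1, ‖Sder θ‖ ≤ B * D := by
    intro θ hθ
    have hc0 : ∀ i, 0 ≤ c θ i := by
      intro i
      have h1 : c θ i = (1 - θ) * u i + θ * v i := by rw [hc]; ring
      rw [h1]
      have := hθ.1; have := hθ.2
      have := hu0 i; have := hv0 i
      nlinarith
    have ht0 : ∀ i, 0 ≤ Real.tanh (c θ i) := fun i => tanh_nonneg (hc0 i)
    have hSabs : |S θ| ≤ (∑ i, Real.tanh (c θ i)) * D := by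
      simp only [hS]
      calc |∑ i, Real.tanh (c θ i) * (v i - u i)|
          ≤ ∑ i, |Real.tanh (c θ i) * (v i - u i)| := Finset.abs_sum_le_sum_abs _ _
        _ ≤ ∑ i, Real.tanh (c θ i) * D := by
            apply Finset.sum_le_sum
            intro i _
            rw [abs_mul, abs_of_nonneg (ht0 i)]
            apply mul_le_mul_of_nonneg_left _ (ht0 i)
            rw [abs_sub_comm]
            exact hpq i
        _ = (∑ i, Real.tanh (c θ i)) * D := by rw [← Finset.sum_mul]
    have hyn : (0:ℝ) ≤ Real.sqrt (W θ / (1 + W θ)) := Real.sqrt_nonneg _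
    rw [Real.norm_eq_abs]
    simp only [hSder]
    rw [abs_neg, abs_mul, abs_of_nonneg hyn]
    calc Real.sqrt (W θ / (1 + W θ)) * |S θ|
        ≤ Real.sqrt (W θ / (1 + W θ)) * ((∑ i, Real.tanh (c θ i)) * D) := by
          apply mul_le_mul_of_nonneg_left hSabs hyn
      _ = ((∑ i, Real.tanh (c θ i)) * Real.sqrt (W θ / (1 + W θ))) * D := by ring
      _ ≤ B * D := by
          apply mul_le_mul_of_nonneg_right _ hD0
          have := hkey (c θ) hc0
          simpa only [hW, hP] using this
  -- mean value inequality
  have hMVT := norm_image_sub_le_of_norm_deriv_le_segment'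
    (f := h) (f' := Sder) (C := B * D) (a := 0) (b := 1)
    (fun x _ => (hderiv x).hasDerivWithinAt) hbound 1 (Set.right_mem_Icc.2 zero_le_one)
  rw [Real.norm_eq_abs, h0val, h1val] at hMVT
  rw [abs_sub_comm]
  simpa using hMVT





variable {V : Type*} [DecidableEq V]

/-- The list of (vertex set, vertex) pairs visited by `seqProd`. -/
def seqSets : Finset V → List V → List (Finset V × V)
  | _, [] => []
  | A, u :: rest => (A, u) :: seqSets (A.erase u) rest

lemma length_seqSets (A : Finset V) (l : List V) : (seqSets A l).length = l.length := by
  induction l generalizing A with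
  | nil => rfl
  | cons u rest ih => simp [seqSets, ih]

lemma seqProd_eq_prod_map (f : Finset V → V → ℝ) (A : Finset V) (l : List V) :
    seqProd f A l = ((seqSets A l).map fun P => f P.1 P.2).prod := by
  induction l generalizing A with
  | nil => simp [seqProd, seqSets]
  | cons u rest ih => simp [seqProd, seqSets, ih]

lemma seqSets_mem {A : Finset V} {l : List V} {P : Finset V × V}
    (h : P ∈ seqSets A l) : P.2 ∈ l ∧ P.1 ⊆ A := by
  induction l generalizing A with
  | nil => simp [seqSets] at h
  | cons u rest ih =>
      simp only [seqSets, List.mem_cons] at h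
      rcases h with h | h
      · subst h
        simp
      · obtain ⟨h1, h2⟩ := ih h
        exact ⟨List.mem_cons_of_mem _ h1, h2.trans (Finset.erase_subset _ _)⟩

lemma seqProd_congr {f g : Finset V → V → ℝ} (h : ∀ B u, f B u = g B u)
    (A : Finset V) (l : List V) : seqProd f A l = seqProd g A l := by
  induction l generalizing A with
  | nil => rfl
  | cons u rest ih => simp [seqProd, h, ih]

lemma seqProd_const_one (A : Finset V) (l : List V) :
    seqProd (fun _ _ => (1:ℝ)) A l = 1 := by
  induction l generalizing A with
  | nil => rfl
  | cons u rest ih => simp [seqProd, ih]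

lemma seqProd_const_zero (A : Finset V) {l : List V} (hl : l ≠ []) :
    seqProd (fun _ _ => (0:ℝ)) A l = 0 := by
  cases l with
  | nil => exact absurd rfl hl
  | cons u rest => simp [seqProd]

lemma seqProd_nonneg {f : Finset V → V → ℝ} (hf : ∀ B u, 0 ≤ f B u)
    (A : Finset V) (l : List V) : 0 ≤ seqProd f A l := by
  induction l generalizing A with
  | nil => exact zero_le_one
  | cons u rest ih => exact mul_nonneg (hf _ _) (ih _)

lemma seqProd_le_one {f : Finset V → V → ℝ} (hf0 : ∀ B u, 0 ≤ f B u)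
    (hf1 : ∀ B u, f B u ≤ 1) (A : Finset V) (l : List V) : seqProd f A l ≤ 1 := by
  induction l generalizing A with
  | nil => exact le_refl 1
  | cons u rest ih =>
      have h1 := seqProd_nonneg hf0 (A.erase u) rest
      calc f A u * seqProd f (A.erase u) rest ≤ 1 * 1 :=
        mul_le_mul (hf1 _ _) (ih _) h1 zero_le_one
      _ = 1 := one_mul 1


section Graph

variable {V : Type*} [Fintype V] [LinearOrder V] (G : SimpleGraph V) [DecidableRel G.Adj]
  {lam base : ℝ}

lemma hcRec_succ (lam base : ℝ) (t : ℕ) (A : Finset V) (v : V) :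
    hcRec G lam base (t+1) A v =
      if (G.neighborFinset v ∩ A.erase v) = ∅ then (1 + lam)⁻¹
      else (1 + lam * seqProd (hcRec G lam base t) (A.erase v)
              ((G.neighborFinset v ∩ A.erase v).sort (· ≤ ·)))⁻¹ := by
  simp only [hcRec]

lemma hcRec_zero (lam base : ℝ) (A : Finset V) (v : V) :
    hcRec G lam base 0 A v = base := by
  simp only [hcRec]

lemma hcRec_bounds (hlam : 0 < lam) (hb0 : 0 ≤ base) (hb1 : base ≤ 1) :
    ∀ (t : ℕ) (A : Finset V) (v : V),
      0 ≤ hcRec G lam base t A v ∧ hcRec G lam base t A v ≤ 1 := by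
  intro t
  induction t with
  | zero => intro A v; exact ⟨hb0, hb1⟩
  | succ t ih =>
      intro A v
      rw [hcRec_succ]
      split
      · constructor
        · positivity
        · rw [inv_le_one_iff₀]; right; linarith
      · have hP0 : 0 ≤ seqProd (hcRec G lam base t) (A.erase v)
            ((G.neighborFinset v ∩ A.erase v).sort (· ≤ ·)) :=
          seqProd_nonneg (fun B u => (ih B u).1) _ _
        constructor
        · positivity
        · rw [inv_le_one_iff₀]; right; nlinarith

lemma hcRec_lb (hlam : 0 < lam) (hb0 : 0 ≤ base) (hb1 : base ≤ 1)
    (t : ℕ) (A : Finset V) (v : V) :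
    (1 + lam)⁻¹ ≤ hcRec G lam base (t+1) A v := by
  rw [hcRec_succ]
  split
  · exact le_refl _
  · have hP1 : seqProd (hcRec G lam base t) (A.erase v)
        ((G.neighborFinset v ∩ A.erase v).sort (· ≤ ·)) ≤ 1 :=
      seqProd_le_one (fun B u => (hcRec_bounds G hlam hb0 hb1 t B u).1)
        (fun B u => (hcRec_bounds G hlam hb0 hb1 t B u).2) _ _
    have hP0 : 0 ≤ seqProd (hcRec G lam base t) (A.erase v)
        ((G.neighborFinset v ∩ A.erase v).sort (· ≤ ·)) :=
      seqProd_nonneg (fun B u => (hcRec_bounds G hlam hb0 hb1 t B u).1) _ _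
    apply inv_anti₀
    · nlinarith
    · nlinarith

lemma hcRec_one_base1 (hlam : 0 < lam) (A : Finset V) (v : V) :
    hcRec G lam 1 1 A v = (1 + lam)⁻¹ := by
  rw [hcRec_succ]
  split
  · rfl
  · rw [seqProd_congr (g := fun _ _ => (1:ℝ)) (fun B u => hcRec_zero G lam 1 B u),
      seqProd_const_one]
    norm_num

lemma hcRec_one_base0 (hlam : 0 < lam) (A : Finset V) (v : V) :
    hcRec G lam 0 1 A v = (1 + lam)⁻¹ ∨ hcRec G lam 0 1 A v = 1 := by
  rw [hcRec_succ]
  split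
  · exact Or.inl rfl
  · right
    next hne =>
      have hl : (G.neighborFinset v ∩ A.erase v).sort (· ≤ ·) ≠ [] := by
        intro hcon
        apply hne
        apply Finset.eq_empty_of_forall_notMem
        intro x hx
        have : x ∈ (G.neighborFinset v ∩ A.erase v).sort (· ≤ ·) :=
          (Finset.mem_sort _).2 hx
        rw [hcon] at this
        exact absurd this List.not_mem_nil
      rw [seqProd_congr (g := fun _ _ => (0:ℝ)) (fun B u => hcRec_zero G lam 0 B u),
        seqProd_const_zero _ hl]
      norm_num

lemma list_prod_map_eq {α : Type*} (m : List α) (h : α → ℝ) :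
    (m.map h).prod = ∏ i : Fin m.length, h (m.get i) := by
  conv_lhs => rw [← List.ofFn_get m]
  rw [List.map_ofFn, List.prod_ofFn]
  rfl

lemma hc_step (hlam : 0 < lam) (t : ℕ) (A : Finset V) (v : V) (B D : ℝ) (k : ℕ)
    (hB0 : 0 ≤ B) (hD0 : 0 ≤ D)
    (hcard : (G.neighborFinset v ∩ A.erase v).card ≤ k)
    (hchild : ∀ A' u, u ∈ G.neighborFinset v ∩ A.erase v → A' ⊆ A.erase v →
      |pot (hcRec G lam 1 (t+1) A' u) - pot (hcRec G lam 0 (t+1) A' u)| ≤ D)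
    (hkey : ∀ n : ℕ, n ≤ k → ∀ c : Fin n → ℝ, (∀ i, 0 ≤ c i) →
      (∑ i, Real.tanh (c i)) * Real.sqrt ((lam * ∏ i, (1 - Real.tanh (c i) ^ 2)) /
        (1 + lam * ∏ i, (1 - Real.tanh (c i) ^ 2))) ≤ B) :
    |pot (hcRec G lam 1 (t+1+1) A v) - pot (hcRec G lam 0 (t+1+1) A v)| ≤ B * D := by
  rw [hcRec_succ, hcRec_succ]
  by_cases hemp : (G.neighborFinset v ∩ A.erase v) = ∅
  · rw [if_pos hemp, if_pos hemp]
    simpa using mul_nonneg hB0 hD0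
  · rw [if_neg hemp, if_neg hemp]
    set l := (G.neighborFinset v ∩ A.erase v).sort (· ≤ ·) with hl
    set A0 := A.erase v with hA0
    set m := seqSets A0 l with hm
    have hn : m.length = (G.neighborFinset v ∩ A.erase v).card := by
      rw [hm, length_seqSets, hl, Finset.length_sort]
    set p : Fin m.length → ℝ := fun i => hcRec G lam 1 (t+1) (m.get i).1 (m.get i).2 with hp
    set q : Fin m.length → ℝ := fun i => hcRec G lam 0 (t+1) (m.get i).1 (m.get i).2 with hq
    have hmem : ∀ i : Fin m.length, (m.get i).2 ∈ l ∧ (m.get i).1 ⊆ A0 :=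
      fun i => seqSets_mem (List.get_mem m i)
    have hmem2 : ∀ i, (m.get i).2 ∈ G.neighborFinset v ∩ A.erase v :=
      fun i => (Finset.mem_sort _).1 ((hmem i).1)
    have hp1 : ∀ i, (1 + lam)⁻¹ ≤ p i :=
      fun i => hcRec_lb G hlam zero_le_one le_rfl t _ _
    have hp2 : ∀ i, p i ≤ 1 :=
      fun i => (hcRec_bounds G hlam zero_le_one le_rfl (t+1) _ _).2
    have hq1 : ∀ i, (1 + lam)⁻¹ ≤ q i :=
      fun i => hcRec_lb G hlam le_rfl zero_le_one t _ _
    have hq2 : ∀ i, q i ≤ 1 :=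
      fun i => (hcRec_bounds G hlam le_rfl zero_le_one (t+1) _ _).2
    have hpq : ∀ i, |pot (p i) - pot (q i)| ≤ D :=
      fun i => hchild (m.get i).1 (m.get i).2 (hmem2 i) ((hmem i).2)
    have hkey' := hkey m.length (hn ▸ hcard)
    have hcontr := contr hlam B D hB0 hD0 p q hp1 hp2 hq1 hq2 hpq hkey'
    have hsp1 : seqProd (hcRec G lam 1 (t+1)) A0 l = ∏ i, p i := by
      rw [seqProd_eq_prod_map, list_prod_map_eq]
    have hsp2 : seqProd (hcRec G lam 0 (t+1)) A0 l = ∏ i, q i := by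
      rw [seqProd_eq_prod_map, list_prod_map_eq]
    rw [hsp1, hsp2]
    exact hcontr

/-- Degree bookkeeping for children. -/
lemma child_card {Δ : ℕ} (hdeg : ∀ u : V, G.degree u ≤ Δ) {A A' : Finset V} {v u : V}
    (hu : u ∈ G.neighborFinset v ∩ A.erase v) (hA' : A' ⊆ A.erase v) :
    (G.neighborFinset u ∩ A'.erase u).card ≤ Δ - 1 := by
  have hadj : G.Adj v u := (SimpleGraph.mem_neighborFinset G v u).1 (Finset.mem_inter.1 hu).1
  have hvu : v ∈ G.neighborFinset u := (SimpleGraph.mem_neighborFinset G u v).2 hadj.symm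
  have hvnot : v ∉ A' := fun hv => (Finset.notMem_erase v A) (hA' hv)
  have hsub : G.neighborFinset u ∩ A'.erase u ⊆ (G.neighborFinset u).erase v := by
    intro x hx
    obtain ⟨hx1, hx2⟩ := Finset.mem_inter.1 hx
    refine Finset.mem_erase.2 ⟨?_, hx1⟩
    intro hxv
    exact hvnot (hxv ▸ Finset.erase_subset _ _ hx2)
  calc (G.neighborFinset u ∩ A'.erase u).card
      ≤ ((G.neighborFinset u).erase v).card := Finset.card_le_card hsub
    _ = (G.neighborFinset u).card - 1 := Finset.card_erase_of_mem hvu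
    _ = G.degree u - 1 := by rw [SimpleGraph.card_neighborFinset_eq_degree]
    _ ≤ Δ - 1 := Nat.sub_le_sub_right (hdeg u) 1

/-- Main induction: contraction of the potential distance. -/
lemma main_ind {Δ d : ℕ} (hlam : 0 < lam) (hd2 : 2 ≤ d) (hΔd : Δ = d + 1)
    (hr : lam * ((d:ℝ) - 1) ^ (d+1) / (d:ℝ) ^ d < 1)
    (hdeg : ∀ u : V, G.degree u ≤ Δ) :
    ∀ (t : ℕ) (A : Finset V) (v : V), (G.neighborFinset v ∩ A.erase v).card ≤ d →
      |pot (hcRec G lam 1 (t+1) A v) - pot (hcRec G lam 0 (t+1) A v)| ≤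
        pot ((1 + lam)⁻¹) *
          (Real.sqrt (1 - (1 - lam * ((d:ℝ) - 1) ^ (d+1) / (d:ℝ) ^ d) / (1 + lam))) ^ t := by
  have h1lam : (0:ℝ) < 1 + lam := by linarith
  have hinv0 : (0:ℝ) < (1 + lam)⁻¹ := by positivity
  have hinv1 : (1 + lam)⁻¹ ≤ 1 := by
    rw [inv_le_one_iff₀]; right; linarith
  have hsmax0 : 0 ≤ pot ((1 + lam)⁻¹) := pot_nonneg hinv0 hinv1
  set ρ : ℝ := Real.sqrt (1 - (1 - lam * ((d:ℝ) - 1) ^ (d+1) / (d:ℝ) ^ d) / (1 + lam)) with hρ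
  have hρ0 : 0 ≤ ρ := Real.sqrt_nonneg _
  intro t
  induction t with
  | zero =>
      intro A v _
      rw [pow_zero, mul_one, hcRec_one_base1 G hlam]
      rcases hcRec_one_base0 G hlam A v with h | h
      · rw [h, sub_self, abs_zero]
        exact hsmax0
      · rw [h, pot_one, sub_zero, abs_of_nonneg hsmax0]
  | succ t ih =>
      intro A v hcard
      have hstep := hc_step G hlam t A v ρ (pot ((1 + lam)⁻¹) * ρ ^ t) d hρ0
        (by positivity) hcard
        (fun A' u hu hA' => ih A' u (by
          have := child_card G hdeg hu hA'
          rwa [hΔd, Nat.add_sub_cancel] at this))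
        (fun n hn c hc =>
          key hlam d n hd2 hn hr (fun i => Real.tanh (c i))
            (fun i => tanh_nonneg (hc i)) (fun i => (tanh_lt_one (c i)).le))
      calc |pot (hcRec G lam 1 (t+1+1) A v) - pot (hcRec G lam 0 (t+1+1) A v)|
          ≤ ρ * (pot ((1 + lam)⁻¹) * ρ ^ t) := hstep
        _ = pot ((1 + lam)⁻¹) * ρ ^ (t+1) := by rw [pow_succ]; ring

/-- Root step: one application of `hc_step` with the trivial bound `Δ`. -/
lemma hc_root {Δ d : ℕ} (hlam : 0 < lam) (hd2 : 2 ≤ d) (hΔd : Δ = d + 1)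
    (hr : lam * ((d:ℝ) - 1) ^ (d+1) / (d:ℝ) ^ d < 1)
    (hdeg : ∀ u : V, G.degree u ≤ Δ) (v : V) (t : ℕ) :
    |pot (hcRec G lam 1 (t+1+1) Finset.univ v) - pot (hcRec G lam 0 (t+1+1) Finset.univ v)| ≤
      (Δ:ℝ) * (pot ((1 + lam)⁻¹) *
        (Real.sqrt (1 - (1 - lam * ((d:ℝ) - 1) ^ (d+1) / (d:ℝ) ^ d) / (1 + lam))) ^ t) := by
  have h1lam : (0:ℝ) < 1 + lam := by linarith
  have hinv0 : (0:ℝ) < (1 + lam)⁻¹ := by positivity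
  have hinv1 : (1 + lam)⁻¹ ≤ 1 := by rw [inv_le_one_iff₀]; right; linarith
  have hsmax0 : 0 ≤ pot ((1 + lam)⁻¹) := pot_nonneg hinv0 hinv1
  set ρ : ℝ := Real.sqrt (1 - (1 - lam * ((d:ℝ) - 1) ^ (d+1) / (d:ℝ) ^ d) / (1 + lam)) with hρ
  have hρ0 : 0 ≤ ρ := Real.sqrt_nonneg _
  apply hc_step G hlam t Finset.univ v ((Δ:ℝ)) (pot ((1 + lam)⁻¹) * ρ ^ t) Δ
    (by positivity) (by positivity)
  · calc (G.neighborFinset v ∩ Finset.univ.erase v).card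
        ≤ (G.neighborFinset v).card := Finset.card_le_card Finset.inter_subset_left
      _ = G.degree v := SimpleGraph.card_neighborFinset_eq_degree G v
      _ ≤ Δ := hdeg v
  · intro A' u hu hA'
    apply main_ind G hlam hd2 hΔd hr hdeg t A' u
    have := child_card G hdeg hu hA'
    rwa [hΔd, Nat.add_sub_cancel] at this
  · intro n hn c hc
    have hW0 : (0:ℝ) ≤ lam * ∏ i, (1 - Real.tanh (c i) ^ 2) := by
      apply mul_nonneg hlam.le
      exact Finset.prod_nonneg fun i _ => by nlinarith [tanh_sq_lt_one (c i)]
    have hsqrt1 : Real.sqrt ((lam * ∏ i, (1 - Real.tanh (c i) ^ 2)) /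
        (1 + lam * ∏ i, (1 - Real.tanh (c i) ^ 2))) ≤ 1 := by
      rw [Real.sqrt_le_one, div_le_one (by linarith)]
      linarith
    have hsum_le : (∑ i, Real.tanh (c i)) ≤ (n:ℝ) := by
      calc (∑ i, Real.tanh (c i)) ≤ ∑ _i : Fin n, (1:ℝ) :=
        Finset.sum_le_sum fun i _ => (tanh_lt_one (c i)).le
      _ = (n:ℝ) := by simp
    have hsum0 : 0 ≤ ∑ i, Real.tanh (c i) :=
      Finset.sum_nonneg fun i _ => tanh_nonneg (hc i)
    calc (∑ i, Real.tanh (c i)) * Real.sqrt ((lam * ∏ i, (1 - Real.tanh (c i) ^ 2)) /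
          (1 + lam * ∏ i, (1 - Real.tanh (c i) ^ 2)))
        ≤ (n:ℝ) * 1 := mul_le_mul hsum_le hsqrt1 (Real.sqrt_nonneg _) (by positivity)
      _ ≤ (Δ:ℝ) := by rw [mul_one]; exact_mod_cast hn

/-- Lipschitz bound for `log ∘ cosh`. -/
lemma logcosh_lip (a b : ℝ) : |Real.log (Real.cosh a) - Real.log (Real.cosh b)| ≤ |a - b| := by
  wlog h : b ≤ a generalizing a b
  · rw [abs_sub_comm, abs_sub_comm a b]
    exact this b a (le_of_not_ge h)
  have hder : ∀ x ∈ Set.Icc b a, HasDerivWithinAt (fun y => Real.log (Real.cosh y))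
      (Real.tanh x) (Set.Icc b a) x := by
    intro x _
    have h1 := (Real.hasDerivAt_cosh x).log (Real.cosh_pos x).ne'
    have h2 : Real.sinh x / Real.cosh x = Real.tanh x := (Real.tanh_eq_sinh_div_cosh x).symm
    rw [h2] at h1
    exact h1.hasDerivWithinAt
  have hbound : ∀ x ∈ Set.Ico b a, ‖Real.tanh x‖ ≤ 1 := by
    intro x _
    rw [Real.norm_eq_abs, abs_le]
    exact ⟨(neg_one_lt_tanh x).le, (tanh_lt_one x).le⟩
  have hMVT := norm_image_sub_le_of_norm_deriv_le_segment' hder hbound a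
    (Set.right_mem_Icc.2 h)
  rw [Real.norm_eq_abs] at hMVT
  have hab : |a - b| = a - b := abs_of_nonneg (by linarith)
  rw [hab]
  linarith [hMVT]

/-- The log-difference is controlled by the potential difference. -/
lemma log_diff_le {F G : ℝ} (hF0 : 0 < F) (hF1 : F ≤ 1) (hG0 : 0 < G) (hG1 : G ≤ 1) :
    |Real.log F - Real.log G| ≤ 2 * |pot F - pot G| := by
  rw [log_eq_pot hF0 hF1, log_eq_pot hG0 hG1]
  have hlip := logcosh_lip (pot F) (pot G)
  have he : (-2) * Real.log (Real.cosh (pot F)) - (-2) * Real.log (Real.cosh (pot G))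
      = (-2) * (Real.log (Real.cosh (pot F)) - Real.log (Real.cosh (pot G))) := by ring
  rw [he, abs_mul]
  have : |(-2 : ℝ)| = 2 := by norm_num
  rw [this]
  exact mul_le_mul_of_nonneg_left hlip (by norm_num)

end Graph
end HC

/-- For the hard-core model with activity
`λ < (Δ−1)^{Δ−1}/(Δ−2)^Δ`, `Δ ≥ 3`, there exist constants `C > 0` and `0 < ρ < 1`
depending only on `λ` and `Δ` such that for every finite graph `G` of maximum degree at
most `Δ`, every vertex `v` and every `t ∈ ℕ`,
`|log Φ_G(v,t) − log Ψ_G(v,t)| ≤ C · ρ^t`. -/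
theorem hardcore_correlation_decay (Δ : ℕ) (hΔ : 3 ≤ Δ) (lam : ℝ) (hlam : 0 < lam)
    (hlt : lam < ((Δ : ℝ) - 1) ^ (Δ - 1) / ((Δ : ℝ) - 2) ^ Δ) :
    ∃ C > (0 : ℝ), ∃ ρ : ℝ, 0 < ρ ∧ ρ < 1 ∧
      ∀ (V : Type) (_ : Fintype V) (_ : LinearOrder V) (G : SimpleGraph V)
        (_ : DecidableRel G.Adj),
        (∀ u : V, G.degree u ≤ Δ) →
        ∀ (v : V) (t : ℕ),
          |Real.log (hcRec G lam 1 t Finset.univ v)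
            - Real.log (hcRec G lam 0 t Finset.univ v)| ≤ C * ρ ^ t := by
  classical
  set d : ℕ := Δ - 1 with hd
  have hΔd : Δ = d + 1 := by omega
  have hd2 : 2 ≤ d := by omega
  have h1lam : (0:ℝ) < 1 + lam := by linarith
  have hdcast : (d:ℝ) = (Δ:ℝ) - 1 := by
    rw [hd]
    push_cast [Nat.cast_sub (by omega : 1 ≤ Δ)]
    ring
  have hd0 : (0:ℝ) < (d:ℝ) := by exact_mod_cast (by omega : 0 < d)
  have hdm1 : (1:ℝ) ≤ (d:ℝ) - 1 := by
    have : (2:ℝ) ≤ (d:ℝ) := by exact_mod_cast hd2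
    linarith
  have hdd_pos : (0:ℝ) < (d:ℝ) ^ d := by positivity
  have hdm1_pos : (0:ℝ) < ((d:ℝ) - 1) ^ (d+1) := by positivity
  have he1' : ((Δ:ℝ) - 1) ^ (Δ - 1) = (d:ℝ) ^ d := by rw [hdcast, hd]
  have he2' : ((Δ:ℝ) - 2) ^ Δ = ((d:ℝ) - 1) ^ (d+1) := by
    rw [hΔd]
    push_cast
    congr 1
    ring
  rw [he1', he2'] at hlt
  set r : ℝ := lam * ((d:ℝ) - 1) ^ (d+1) / (d:ℝ) ^ d with hrdef
  have hr1 : r < 1 := by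
    rw [hrdef, div_lt_one hdd_pos]
    rw [lt_div_iff₀ hdm1_pos] at hlt
    linarith
  have hr0 : 0 < r := by rw [hrdef]; positivity
  set e : ℝ := 1 - (1 - r) / (1 + lam) with hedef
  have hfrac0 : 0 < (1 - r) / (1 + lam) := div_pos (by linarith) h1lam
  have hfrac1 : (1 - r) / (1 + lam) < 1 := by
    rw [div_lt_one h1lam]
    linarith
  have he0 : 0 < e := by rw [hedef]; linarith
  have hee1 : e < 1 := by rw [hedef]; linarith
  set ρ : ℝ := Real.sqrt e with hρdef
  have hρ0 : 0 < ρ := Real.sqrt_pos.2 he0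
  have hρsq : ρ ^ 2 = e := Real.sq_sqrt he0.le
  have hρ1 : ρ < 1 := by nlinarith
  have hinv0 : (0:ℝ) < (1 + lam)⁻¹ := by positivity
  have hinv1 : (1 + lam)⁻¹ ≤ 1 := by rw [inv_le_one_iff₀]; right; linarith
  set smax : ℝ := HC.pot ((1 + lam)⁻¹) with hsmaxdef
  have hsmax0 : 0 ≤ smax := HC.pot_nonneg hinv0 hinv1
  have hlog0 : 0 < Real.log (1 + lam) := Real.log_pos (by linarith)
  set NUM : ℝ := 2 * (Δ:ℝ) * smax + Real.log (1 + lam) + 1 with hNdef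
  have hΔ0 : (0:ℝ) ≤ (Δ:ℝ) := by positivity
  have hNUM : 0 < NUM := by
    have : 0 ≤ 2 * (Δ:ℝ) * smax := by positivity
    rw [hNdef]
    linarith
  refine ⟨NUM / ρ ^ 2, by positivity, ρ, hρ0, hρ1, ?_⟩
  intro V _ _ G _ hdeg v t
  have hmatch : Real.sqrt (1 - (1 - lam * ((d:ℝ) - 1) ^ (d+1) / (d:ℝ) ^ d) / (1 + lam)) = ρ := by
    rw [hρdef, hedef, hrdef]
  match t with
  | 0 =>
      rw [HC.hcRec_zero, HC.hcRec_zero, Real.log_one, Real.log_zero, sub_self, abs_zero]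
      positivity
  | 1 =>
      rw [HC.hcRec_one_base1 G hlam]
      rcases HC.hcRec_one_base0 G hlam Finset.univ v with h | h
      · rw [h, sub_self, abs_zero]
        positivity
      · rw [h, Real.log_one, Real.log_inv, sub_zero, abs_neg,
          abs_of_nonneg hlog0.le, pow_one]
        have hC1 : NUM / ρ ^ 2 * ρ = NUM / ρ := by
          field_simp
        rw [hC1, le_div_iff₀ hρ0]
        have hls : 0 ≤ 2 * (Δ:ℝ) * smax := by positivity
        nlinarith [hlog0]
  | (s+2) =>
      have hroot := HC.hc_root G hlam hd2 hΔd hr1 hdeg v s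
      rw [hmatch] at hroot
      have hbd1 : (1 + lam)⁻¹ ≤ hcRec G lam 1 (s+1+1) Finset.univ v :=
        HC.hcRec_lb G hlam zero_le_one le_rfl (s+1) _ _
      have hbd2 : (1 + lam)⁻¹ ≤ hcRec G lam 0 (s+1+1) Finset.univ v :=
        HC.hcRec_lb G hlam le_rfl zero_le_one (s+1) _ _
      have hub1 : hcRec G lam 1 (s+1+1) Finset.univ v ≤ 1 :=
        (HC.hcRec_bounds G hlam zero_le_one le_rfl (s+1+1) _ _).2
      have hub2 : hcRec G lam 0 (s+1+1) Finset.univ v ≤ 1 :=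
        (HC.hcRec_bounds G hlam le_rfl zero_le_one (s+1+1) _ _).2
      have hlog := HC.log_diff_le (lt_of_lt_of_le hinv0 hbd1) hub1
        (lt_of_lt_of_le hinv0 hbd2) hub2
      have hρs : (0:ℝ) ≤ ρ ^ s := by positivity
      have hchain : |Real.log (hcRec G lam 1 (s+1+1) Finset.univ v)
          - Real.log (hcRec G lam 0 (s+1+1) Finset.univ v)| ≤ NUM * ρ ^ s := by
        calc |Real.log (hcRec G lam 1 (s+1+1) Finset.univ v)
            - Real.log (hcRec G lam 0 (s+1+1) Finset.univ v)|
            ≤ 2 * |HC.pot (hcRec G lam 1 (s+1+1) Finset.univ v)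
                - HC.pot (hcRec G lam 0 (s+1+1) Finset.univ v)| := hlog
          _ ≤ 2 * ((Δ:ℝ) * (smax * ρ ^ s)) := by
              apply mul_le_mul_of_nonneg_left hroot (by norm_num)
          _ = (2 * (Δ:ℝ) * smax) * ρ ^ s := by ring
          _ ≤ NUM * ρ ^ s := by
              apply mul_le_mul_of_nonneg_right _ hρs
              rw [hNdef]
              linarith [hlog0]
      have hpow : NUM / ρ ^ 2 * ρ ^ (s+2) = NUM * ρ ^ s := by
        rw [pow_add]
        field_simp
      rw [hpow]
      exact hchain
end

section
/- If the hard-core model on ℤ^d with activity λ satisfies Strong Spatial Mixing, then the free energy exists and equals P(d,λ) = −log P_{ℤ^d_{≺0}}(0 ∉ I), i.e., lim_{n→∞} (log Z_{B_n})/|B_n| = −log p*, where p* is the probability under the unique Gibbs measure on the sublattice ℤ^d_{≺0} = {u ∈ ℤ^d : u ≺ 0} ∪ {0} (lexicographic order) that the origin is not in the random independent set. -/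
open Finset Filter

/-- Nearest-neighbor adjacency on `ℤ^d`: ℓ¹-distance equal to `1`. -/
def latAdj {d : ℕ} (v u : Fin d → ℤ) : Prop := (∑ j, |v j - u j|) = 1

instance {d : ℕ} : DecidableRel (latAdj (d := d)) := fun v u => by
  unfold latAdj; infer_instance

/-- Lexicographic (by highest differing coordinate) strict order on `ℤ^d`:
`v ≺ u` iff `u_d > v_d`, or there is `k` with `u_k > v_k` and `u_j = v_j` for `j > k`. -/
def lexPrec {d : ℕ} (v u : Fin d → ℤ) : Prop :=
  ∃ k : Fin d, v k < u k ∧ ∀ j : Fin d, k < j → v j = u j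

instance {d : ℕ} : DecidableRel (lexPrec (d := d)) := fun v u => by
  unfold lexPrec; infer_instance

/-- The box `B_n = [-n, n]^d ∩ ℤ^d`. -/
noncomputable def latCube (d n : ℕ) : Finset (Fin d → ℤ) :=
  Finset.Icc (fun _ => -(n : ℤ)) (fun _ => (n : ℤ))

/-- Finite-volume hard-core partition function on the region `A ⊆ ℤ^d` with activity
`lam`: sum of `lam ^ |I|` over sets `I ⊆ A` independent for the lattice adjacency. -/
noncomputable def hcZd {d : ℕ} (lam : ℝ) (A : Finset (Fin d → ℤ)) : ℝ :=
  ∑ I ∈ A.powerset.filter (fun I => ∀ u ∈ I, ∀ w ∈ I, ¬ latAdj u w), lam ^ I.card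

/-- Finite-volume probability that the origin is NOT in the random independent set,
under the hard-core measure on the region `A`. -/
noncomputable def hcPnot0 {d : ℕ} (lam : ℝ) (A : Finset (Fin d → ℤ)) : ℝ :=
  hcZd lam (A.erase 0) / hcZd lam A

/-- The finite-volume truncation `B_n ∩ ℤ^d_{≺0}` of the sublattice
`ℤ^d_{≺0} = {u : u ≺ 0} ∪ {0}`. -/
noncomputable def halfLat (d n : ℕ) : Finset (Fin d → ℤ) :=
  (latCube d n).filter (fun u => lexPrec u 0 ∨ u = 0)

section Lex
variable {d : ℕ}

lemma lexPrec_irrefl (v : Fin d → ℤ) : ¬ lexPrec v v := by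
  rintro ⟨k, hk, -⟩; exact lt_irrefl _ hk

lemma lexPrec_trans {v u w : Fin d → ℤ} (h1 : lexPrec v u) (h2 : lexPrec u w) :
    lexPrec v w := by
  obtain ⟨k1, hk1, h1'⟩ := h1
  obtain ⟨k2, hk2, h2'⟩ := h2
  rcases lt_trichotomy k1 k2 with h | h | h
  · exact ⟨k2, by rw [h1' k2 h]; exact hk2,
      fun j hj => (h1' j (h.trans hj)).trans (h2' j hj)⟩
  · subst h; exact ⟨k1, hk1.trans hk2, fun j hj => (h1' j hj).trans (h2' j hj)⟩
  · exact ⟨k1, by rw [h2' k1 h] at hk1; exact hk1,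
      fun j hj => (h1' j hj).trans (h2' j (h.trans hj))⟩

lemma lexPrec_asymm {v u : Fin d → ℤ} (h1 : lexPrec v u) (h2 : lexPrec u v) : False :=
  lexPrec_irrefl v (lexPrec_trans h1 h2)

lemma lexPrec_total {v u : Fin d → ℤ} (h : v ≠ u) : lexPrec v u ∨ lexPrec u v := by
  classical
  have hne : ∃ k, v k ≠ u k := by
    by_contra hc; push_neg at hc; exact h (funext hc)
  set S := Finset.univ.filter (fun k => v k ≠ u k) with hS
  have hSne : S.Nonempty := ⟨hne.choose, by simp [hS, hne.choose_spec]⟩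
  set k := S.max' hSne with hk
  have hkS : k ∈ S := S.max'_mem hSne
  have hkne : v k ≠ u k := by simpa [hS] using hkS
  have hagree : ∀ j, k < j → v j = u j := by
    intro j hj
    by_contra hc
    exact absurd (S.le_max' j (by simp [hS, hc])) (not_le.2 hj)
  rcases lt_or_gt_of_ne hkne with h' | h'
  · exact Or.inl ⟨k, h', hagree⟩
  · exact Or.inr ⟨k, h', fun j hj => (hagree j hj).symm⟩

lemma exists_lexMax (A : Finset (Fin d → ℤ)) (h : A.Nonempty) :
    ∃ v ∈ A, ∀ u ∈ A, u ≠ v → lexPrec u v := by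
  classical
  induction A using Finset.induction_on with
  | empty => simp at h
  | @insert a s ha ih =>
    rcases s.eq_empty_or_nonempty with rfl | hs
    · exact ⟨a, by simp, by simp⟩
    · obtain ⟨v, hv, hmax⟩ := ih hs
      have hav : a ≠ v := fun hc => ha (hc ▸ hv)
      rcases lexPrec_total hav with h1 | h1
      · refine ⟨v, Finset.mem_insert_of_mem hv, ?_⟩
        intro u hu hune
        rcases Finset.mem_insert.1 hu with rfl | hu
        · exact h1
        · exact hmax u hu hune
      · refine ⟨a, Finset.mem_insert_self a s, ?_⟩
        intro u hu hune
        rcases Finset.mem_insert.1 hu with rfl | hu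
        · exact absurd rfl hune
        · rcases eq_or_ne u v with rfl | huv
          · exact h1
          · exact lexPrec_trans (hmax u hu huv) h1

lemma lexPrec_add {v u t : Fin d → ℤ} : lexPrec (v + t) (u + t) ↔ lexPrec v u := by
  constructor
  · rintro ⟨k, hk, hag⟩
    exact ⟨k, by simpa using hk, fun j hj => by
      have := hag j hj; simpa using this⟩
  · rintro ⟨k, hk, hag⟩
    exact ⟨k, by simpa using hk, fun j hj => by simp [hag j hj]⟩

lemma lexPrec_sub {v u t : Fin d → ℤ} : lexPrec (v - t) (u - t) ↔ lexPrec v u := by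
  rw [sub_eq_add_neg, sub_eq_add_neg, lexPrec_add]

end Lex

section Z
variable {d : ℕ} {lam : ℝ}

lemma latAdj_sub {u w t : Fin d → ℤ} : latAdj (u - t) (w - t) ↔ latAdj u w := by
  unfold latAdj
  simp [sub_sub_sub_cancel_right]

noncomputable def hcInd {d : ℕ} (A : Finset (Fin d → ℤ)) : Finset (Finset (Fin d → ℤ)) :=
  A.powerset.filter (fun I => ∀ u ∈ I, ∀ w ∈ I, ¬ latAdj u w)

lemma hcZd_eq (A : Finset (Fin d → ℤ)) : hcZd lam A = ∑ I ∈ hcInd A, lam ^ I.card := rfl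

lemma mem_hcInd {A I : Finset (Fin d → ℤ)} :
    I ∈ hcInd A ↔ I ⊆ A ∧ ∀ u ∈ I, ∀ w ∈ I, ¬ latAdj u w := by
  simp [hcInd]

lemma empty_mem_hcInd (A : Finset (Fin d → ℤ)) : ∅ ∈ hcInd A := by
  simp [mem_hcInd]

lemma hcInd_mono {A B : Finset (Fin d → ℤ)} (h : B ⊆ A) : hcInd B ⊆ hcInd A := by
  intro I hI
  rw [mem_hcInd] at *
  exact ⟨hI.1.trans h, hI.2⟩

lemma one_le_hcZd (hlam : 0 < lam) (A : Finset (Fin d → ℤ)) : 1 ≤ hcZd lam A := by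
  have := Finset.single_le_sum (f := fun I : Finset (Fin d → ℤ) => lam ^ I.card)
    (fun I _ => le_of_lt (pow_pos hlam _)) (empty_mem_hcInd A)
  simpa [hcZd_eq] using this

lemma hcZd_pos (hlam : 0 < lam) (A : Finset (Fin d → ℤ)) : 0 < hcZd lam A :=
  lt_of_lt_of_le one_pos (one_le_hcZd hlam A)

lemma hcZd_mono (hlam : 0 < lam) {A B : Finset (Fin d → ℤ)} (h : B ⊆ A) :
    hcZd lam B ≤ hcZd lam A := by
  rw [hcZd_eq, hcZd_eq]
  exact Finset.sum_le_sum_of_subset_of_nonneg (hcInd_mono h)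
    (fun I _ _ => le_of_lt (pow_pos hlam _))

lemma hcZd_le (hlam : 0 < lam) (A : Finset (Fin d → ℤ)) :
    hcZd lam A ≤ (1 + lam) * hcZd lam (A.erase 0) := by
  classical
  rw [hcZd_eq, ← Finset.sum_filter_add_sum_filter_not (hcInd A) (fun I => (0 : Fin d → ℤ) ∈ I)]
  have h1 : ∑ I ∈ (hcInd A).filter (fun I => (0 : Fin d → ℤ) ∉ I), lam ^ I.card
      ≤ hcZd lam (A.erase 0) := by
    rw [hcZd_eq]
    apply Finset.sum_le_sum_of_subset_of_nonneg
    · intro I hI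
      rw [Finset.mem_filter, mem_hcInd] at hI
      rw [mem_hcInd]
      refine ⟨fun x hx => Finset.mem_erase.2 ⟨?_, hI.1.1 hx⟩, hI.1.2⟩
      rintro rfl; exact hI.2 hx
    · exact fun I _ _ => le_of_lt (pow_pos hlam _)
  have h2 : ∑ I ∈ (hcInd A).filter (fun I => (0 : Fin d → ℤ) ∈ I), lam ^ I.card
      ≤ lam * hcZd lam (A.erase 0) := by
    set T := (hcInd A).filter (fun I => (0 : Fin d → ℤ) ∈ I) with hT
    have key : ∀ I ∈ T, lam ^ I.card = lam * lam ^ (I.erase 0).card := by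
      intro I hI
      rw [hT, Finset.mem_filter] at hI
      have hc1 : 1 ≤ I.card := Finset.card_pos.2 ⟨0, hI.2⟩
      have : I.card = (I.erase 0).card + 1 := by
        rw [Finset.card_erase_of_mem hI.2]; omega
      rw [this, pow_succ]; ring
    have hinj : ∀ I₁ ∈ T, ∀ I₂ ∈ T, I₁.erase 0 = I₂.erase 0 → I₁ = I₂ := by
      intro I₁ h₁ I₂ h₂ he
      rw [hT, Finset.mem_filter] at h₁ h₂
      rw [← Finset.insert_erase h₁.2, ← Finset.insert_erase h₂.2, he]
    calc ∑ I ∈ T, lam ^ I.card = ∑ I ∈ T, lam * lam ^ (I.erase 0).card :=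
          Finset.sum_congr rfl key
      _ = lam * ∑ I ∈ T, lam ^ (I.erase 0).card := by rw [Finset.mul_sum]
      _ ≤ lam * hcZd lam (A.erase 0) := by
          apply mul_le_mul_of_nonneg_left _ hlam.le
          have himg := Finset.sum_image (f := fun J : Finset (Fin d → ℤ) => lam ^ J.card)
            (g := fun I : Finset (Fin d → ℤ) => I.erase 0) (s := T) hinj
          rw [← himg, hcZd_eq]
          apply Finset.sum_le_sum_of_subset_of_nonneg
          · intro J hJ
            obtain ⟨I, hI, rfl⟩ := Finset.mem_image.1 hJ
            rw [hT, Finset.mem_filter, mem_hcInd] at hI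
            rw [mem_hcInd]
            refine ⟨fun x hx => ?_, fun u hu w hw => hI.1.2 u (Finset.mem_of_mem_erase hu) w
              (Finset.mem_of_mem_erase hw)⟩
            rw [Finset.mem_erase] at hx
            exact Finset.mem_erase.2 ⟨hx.1, hI.1.1 hx.2⟩
          · exact fun I _ _ => le_of_lt (pow_pos hlam _)
  have h3 : 0 ≤ hcZd lam (A.erase 0) := le_of_lt (hcZd_pos hlam _)
  nlinarith [h1, h2, h3]

end Z

section Trans
variable {d : ℕ} {lam : ℝ}

lemma latAdj_add {u w t : Fin d → ℤ} : latAdj (u + t) (w + t) ↔ latAdj u w := by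
  unfold latAdj
  simp [add_sub_add_right_eq_sub]

lemma hcInd_image_add (A : Finset (Fin d → ℤ)) (t : Fin d → ℤ) :
    hcInd (A.image (· + t)) = (hcInd A).image (fun I => I.image (· + t)) := by
  classical
  ext J
  constructor
  · intro hJ
    rw [mem_hcInd] at hJ
    obtain ⟨I, hIA, rfl⟩ := Finset.subset_image_iff.1 hJ.1
    refine Finset.mem_image.2 ⟨I, ?_, rfl⟩
    rw [mem_hcInd]
    refine ⟨hIA, fun u hu w hw hadj => ?_⟩
    exact hJ.2 _ (Finset.mem_image_of_mem _ hu) _ (Finset.mem_image_of_mem _ hw)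
      (latAdj_add.2 hadj)
  · intro hJ
    obtain ⟨I, hI, rfl⟩ := Finset.mem_image.1 hJ
    rw [mem_hcInd] at hI ⊢
    refine ⟨Finset.image_subset_image hI.1, fun u hu w hw => ?_⟩
    obtain ⟨u', hu', rfl⟩ := Finset.mem_image.1 hu
    obtain ⟨w', hw', rfl⟩ := Finset.mem_image.1 hw
    exact fun hadj => hI.2 u' hu' w' hw' (latAdj_add.1 hadj)

lemma hcZd_image_add (lam : ℝ) (A : Finset (Fin d → ℤ)) (t : Fin d → ℤ) :
    hcZd lam (A.image (· + t)) = hcZd lam A := by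
  classical
  have hinj : Function.Injective (fun u : Fin d → ℤ => u + t) := add_left_injective t
  rw [hcZd_eq, hcZd_eq, hcInd_image_add,
    Finset.sum_image (fun I hI J hJ h => Finset.image_injective hinj h)]
  exact Finset.sum_congr rfl fun I _ => by rw [Finset.card_image_of_injective _ hinj]

lemma hcZd_translate (lam : ℝ) (A : Finset (Fin d → ℤ)) (t : Fin d → ℤ) :
    hcZd lam (A.image (· - t)) = hcZd lam A := by
  have h : (fun u : Fin d → ℤ => u - t) = (fun u => u + (-t)) :=
    funext fun u => sub_eq_add_neg u t
  rw [h, hcZd_image_add]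

lemma hcPnot0_image_sub (A : Finset (Fin d → ℤ)) (v : Fin d → ℤ) :
    hcPnot0 lam (A.image (· - v)) = hcZd lam (A.erase v) / hcZd lam A := by
  classical
  have hinj : Function.Injective (fun u : Fin d → ℤ => u - v) := fun a b h => by
    simpa using congrArg (· + v) h
  have h0 : (A.image (· - v)).erase 0 = (A.erase v).image (· - v) := by
    rw [Finset.image_erase hinj]
    congr 1
    exact (sub_self v).symm
  rw [hcPnot0, h0, hcZd_translate, hcZd_translate]

end Trans

section Bounds
variable {d : ℕ} {lam : ℝ}

lemma hcPnot0_le_one (hlam : 0 < lam) (A : Finset (Fin d → ℤ)) : hcPnot0 lam A ≤ 1 := by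
  rw [hcPnot0]
  exact div_le_one_of_le₀ (hcZd_mono hlam (Finset.erase_subset _ _))
    (le_of_lt (hcZd_pos hlam A))

lemma le_hcPnot0 (hlam : 0 < lam) (A : Finset (Fin d → ℤ)) :
    1 / (1 + lam) ≤ hcPnot0 lam A := by
  rw [hcPnot0, div_le_div_iff₀ (by linarith) (hcZd_pos hlam A)]
  calc 1 * hcZd lam A = hcZd lam A := one_mul _
    _ ≤ (1 + lam) * hcZd lam (A.erase 0) := hcZd_le hlam A
    _ = hcZd lam (A.erase 0) * (1 + lam) := mul_comm _ _

lemma hcPnot0_pos (hlam : 0 < lam) (A : Finset (Fin d → ℤ)) : 0 < hcPnot0 lam A :=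
  lt_of_lt_of_le (by positivity) (le_hcPnot0 hlam A)

lemma abs_log_hcPnot0_le (hlam : 0 < lam) (A : Finset (Fin d → ℤ)) :
    |Real.log (hcPnot0 lam A)| ≤ Real.log (1 + lam) := by
  rw [abs_le]
  constructor
  · have h1 : Real.log (1 / (1 + lam)) ≤ Real.log (hcPnot0 lam A) :=
      Real.log_le_log (by positivity) (le_hcPnot0 hlam A)
    rw [Real.log_div one_ne_zero (by linarith), Real.log_one] at h1
    linarith
  · calc Real.log (hcPnot0 lam A) ≤ Real.log 1 :=
        Real.log_le_log (hcPnot0_pos hlam A) (hcPnot0_le_one hlam A)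
    _ = 0 := Real.log_one
    _ ≤ Real.log (1 + lam) := Real.log_nonneg (by linarith)

lemma abs_log_sub_log_le {a b m : ℝ} (hm : 0 < m) (ha : m ≤ a) (hb : m ≤ b) :
    |Real.log a - Real.log b| ≤ |a - b| / m := by
  have hap : 0 < a := lt_of_lt_of_le hm ha
  have hbp : 0 < b := lt_of_lt_of_le hm hb
  have key : ∀ x y : ℝ, 0 < x → m ≤ y → Real.log x - Real.log y ≤ |x - y| / m := by
    intro x y hx hy
    have hyp : 0 < y := lt_of_lt_of_le hm hy
    have h1 : Real.log x - Real.log y = Real.log (x / y) := (Real.log_div hx.ne' hyp.ne').symm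
    have h2 : Real.log (x / y) ≤ x / y - 1 := Real.log_le_sub_one_of_pos (by positivity)
    have h3 : x / y - 1 = (x - y) / y := by field_simp
    rcases le_or_gt x y with h | h
    · have : Real.log (x / y) ≤ 0 := by
        rw [h3] at h2
        have : (x - y) / y ≤ 0 := div_nonpos_of_nonpos_of_nonneg (by linarith) hyp.le
        linarith
      have : Real.log x - Real.log y ≤ 0 := by rw [h1]; linarith
      exact this.trans (by positivity)
    · have h4 : (x - y) / y ≤ (x - y) / m := by
        apply div_le_div_of_nonneg_left (by linarith) hm hy
      have h5 : (x - y) / m ≤ |x - y| / m := by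
        gcongr
        exact le_abs_self _
      linarith [h1 ▸ (h2.trans (h3 ▸ (h4.trans h5)))]
  rw [abs_sub_le_iff]
  constructor
  · exact key a b hap hb
  · rw [abs_sub_comm]
    exact key b a hbp ha

end Bounds

section Telescope
variable {d : ℕ}

noncomputable def Pterm (lam : ℝ) (A : Finset (Fin d → ℤ)) (v : Fin d → ℤ) : ℝ :=
  hcPnot0 lam ((A.filter (fun u => lexPrec u v ∨ u = v)).image (· - v))

lemma logZ_eq {lam : ℝ} (hlam : 0 < lam) (A : Finset (Fin d → ℤ)) :
    Real.log (hcZd lam A) = ∑ v ∈ A, -Real.log (Pterm lam A v) := by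
  classical
  induction A using Finset.strongInduction with
  | _ A ih =>
    rcases A.eq_empty_or_nonempty with rfl | hA
    · have : hcZd lam (∅ : Finset (Fin d → ℤ)) = 1 := by
        rw [hcZd_eq]
        rw [show hcInd (∅ : Finset (Fin d → ℤ)) = {∅} by
          ext I
          simp only [mem_hcInd, Finset.subset_empty, Finset.mem_singleton]
          constructor
          · rintro ⟨rfl, -⟩; rfl
          · rintro rfl; simp]
        simp
      simp [this]
    · obtain ⟨v, hv, hmax⟩ := exists_lexMax A hA
      set A' := A.erase v with hA'
      have hfilter : A.filter (fun u => lexPrec u v ∨ u = v) = A := by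
        apply Finset.filter_true_of_mem
        intro u hu
        rcases eq_or_ne u v with rfl | hne
        · exact Or.inr rfl
        · exact Or.inl (hmax u hu hne)
      have hPv : Pterm lam A v = hcZd lam A' / hcZd lam A := by
        rw [Pterm, hfilter, hcPnot0_image_sub]
      have hterm : ∀ u ∈ A', Pterm lam A u = Pterm lam A' u := by
        intro u hu
        have h1 : A.filter (fun w => lexPrec w u ∨ w = u)
            = A'.filter (fun w => lexPrec w u ∨ w = u) := by
          conv_lhs => rw [← Finset.insert_erase hv]
          rw [Finset.filter_insert, if_neg]
          rintro (h | h)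
          · rw [hA', Finset.mem_erase] at hu
            exact lexPrec_asymm h (hmax u hu.2 hu.1)
          · rw [hA', Finset.mem_erase] at hu
            exact hu.1 h.symm
        rw [Pterm, Pterm, h1]
      have hsum : ∑ u ∈ A, -Real.log (Pterm lam A u)
          = -Real.log (Pterm lam A v) + ∑ u ∈ A', -Real.log (Pterm lam A' u) := by
        rw [← Finset.add_sum_erase A _ hv, ← hA']
        congr 1
        exact Finset.sum_congr rfl fun u hu => by rw [hterm u hu]
      rw [hsum, ← ih A' (Finset.erase_ssubset hv), hPv,
        Real.log_div (hcZd_pos hlam A').ne' (hcZd_pos hlam A).ne']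
      ring

end Telescope

section Cube
variable {d : ℕ}

lemma mem_latCube {n : ℕ} {v : Fin d → ℤ} :
    v ∈ latCube d n ↔ ∀ j, -(n : ℤ) ≤ v j ∧ v j ≤ (n : ℤ) := by
  rw [latCube, Finset.mem_Icc, Pi.le_def, Pi.le_def]
  constructor
  · exact fun h j => ⟨h.1 j, h.2 j⟩
  · exact fun h => ⟨fun j => (h j).1, fun j => (h j).2⟩

lemma latCube_mono {r n : ℕ} (h : r ≤ n) : latCube d r ⊆ latCube d n := by
  intro v hv
  rw [mem_latCube] at hv ⊢
  intro j
  have := hv j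
  have h' : (r : ℤ) ≤ (n : ℤ) := Int.ofNat_le.2 h
  exact ⟨by linarith [this.1], by linarith [this.2]⟩

lemma card_latCube (n : ℕ) : (latCube d n).card = (2 * n + 1) ^ d := by
  rw [latCube, Pi.card_Icc]
  have : ∀ j : Fin d, (Finset.Icc (-(n:ℤ)) (n:ℤ)).card = 2 * n + 1 := by
    intro j
    rw [Int.card_Icc]
    omega
  rw [Finset.prod_congr rfl (fun j _ => this j)]
  simp

lemma halfLat_inter {r n : ℕ} (h : r ≤ n) :
    halfLat d n ∩ latCube d r = halfLat d r := by
  ext u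
  rw [Finset.mem_inter, halfLat, halfLat, Finset.mem_filter, Finset.mem_filter]
  constructor
  · rintro ⟨⟨-, hp⟩, hu⟩; exact ⟨hu, hp⟩
  · rintro ⟨hu, hp⟩; exact ⟨⟨latCube_mono h hu, hp⟩, hu⟩

lemma bulk_inter {r n : ℕ} (h : r ≤ n) {v : Fin d → ℤ} (hv : v ∈ latCube d (n - r)) :
    ((latCube d n).filter (fun u => lexPrec u v ∨ u = v)).image (· - v) ∩ latCube d r
      = halfLat d r := by
  classical
  rw [mem_latCube] at hv
  ext x
  rw [Finset.mem_inter, halfLat, Finset.mem_filter, Finset.mem_image]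
  constructor
  · rintro ⟨⟨u, hu, rfl⟩, hx⟩
    rw [Finset.mem_filter] at hu
    refine ⟨hx, ?_⟩
    rcases hu.2 with h' | h'
    · left
      rwa [show (0 : Fin d → ℤ) = v - v by rw [sub_self], lexPrec_sub]
    · right; rw [h', sub_self]
  · rintro ⟨hx, hp⟩
    refine ⟨⟨v + x, ?_, by abel⟩, hx⟩
    rw [Finset.mem_filter]
    rw [mem_latCube] at hx ⊢
    have hnr : ((n - r : ℕ) : ℤ) = (n : ℤ) - (r : ℤ) := by
      rw [Int.ofNat_sub h]
    constructor
    · intro j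
      have h1 := hv j
      have h2 := hx j
      rw [hnr] at h1
      constructor
      · simp only [Pi.add_apply]; linarith [h1.1, h2.1]
      · simp only [Pi.add_apply]; linarith [h1.2, h2.2]
    · rcases hp with h' | h'
      · left
        have : lexPrec (x + v) (0 + v) := by rwa [lexPrec_add]
        simpa [add_comm] using this
      · right; rw [h']; abel

lemma pow_sub_pow_le_real {a b : ℝ} (hb : 0 ≤ b) (hab : b ≤ a) (k : ℕ) :
    a ^ k - b ^ k ≤ k * (a - b) * a ^ (k - 1) := by
  induction k with
  | zero => simp
  | succ k ih =>
    have ha : 0 ≤ a := hb.trans hab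
    cases k with
    | zero => simp
    | succ k' =>
      simp only [Nat.add_sub_cancel] at ih ⊢
      push_cast at ih ⊢
      have h1 := mul_le_mul_of_nonneg_left ih ha
      have h2 := mul_le_mul_of_nonneg_left (pow_le_pow_left₀ hb hab (k' + 1)) (sub_nonneg.2 hab)
      have h1' : a * ((↑k' + 1) * (a - b) * a ^ k') = (↑k' + 1) * (a - b) * a ^ (k' + 1) := by
        ring
      have key : a ^ (k' + 1 + 1) - b ^ (k' + 1 + 1)
          = a * (a ^ (k' + 1) - b ^ (k' + 1)) + (a - b) * b ^ (k' + 1) := by ring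
      linarith [h1, h2, h1', key]

end Cube


/-- If the hard-core model on `ℤ^d` with activity `λ` satisfies Strong
Spatial Mixing (formulated here in its hard-core form: marginals at the origin on any two
finite regions agreeing on the box `B_r` differ by at most `R(r)`, where `R(r) → 0`;
conditioning on spins is equivalent to deleting vertices for the hard-core model), then
the free energy exists and `lim_n (log Z_{B_n})/|B_n| = −log p*`, where
`p* = P_{ℤ^d_{≺0}}(0 ∉ I)` is the limit of the finite-volume marginals on
`B_n ∩ ℤ^d_{≺0}`. -/
theorem hardcore_free_energy_representation (d : ℕ) (hd : 1 ≤ d)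
    (lam : ℝ) (hlam : 0 < lam)
    (SSM : ∃ R : ℕ → ℝ, Tendsto R atTop (nhds 0) ∧
      ∀ (r : ℕ) (A₁ A₂ : Finset (Fin d → ℤ)),
        A₁ ∩ latCube d r = A₂ ∩ latCube d r →
        |hcPnot0 lam A₁ - hcPnot0 lam A₂| ≤ R r) :
    ∃ pstar : ℝ, 0 < pstar ∧
      Tendsto (fun n => hcPnot0 lam (halfLat d n)) atTop (nhds pstar) ∧
      Tendsto (fun n => Real.log (hcZd lam (latCube d n)) / ((latCube d n).card : ℝ))
        atTop (nhds (- Real.log pstar)) := by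
  classical
  obtain ⟨R, hR0, hRssm⟩ := SSM
  have h1lam : (0 : ℝ) < 1 + lam := by linarith
  set m : ℝ := 1 / (1 + lam) with hm
  have hmpos : 0 < m := by rw [hm]; positivity
  set q : ℕ → ℝ := fun n => hcPnot0 lam (halfLat d n) with hq
  have hcau : CauchySeq q := by
    apply cauchySeq_of_le_tendsto_0 R _ hR0
    intro n m' N hn hm'
    rw [Real.dist_eq]
    apply hRssm N
    rw [halfLat_inter hn, halfLat_inter hm']
  obtain ⟨pstar, hp⟩ := cauchySeq_tendsto_of_complete hcau
  have hpm : m ≤ pstar :=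
    ge_of_tendsto hp (Eventually.of_forall fun n => le_hcPnot0 hlam _)
  have hp1 : pstar ≤ 1 :=
    le_of_tendsto hp (Eventually.of_forall fun n => hcPnot0_le_one hlam _)
  have hppos : 0 < pstar := lt_of_lt_of_le hmpos hpm
  refine ⟨pstar, hppos, hp, ?_⟩
  have habsp : |Real.log pstar| ≤ Real.log (1 + lam) := by
    rw [abs_le]
    constructor
    · have h1 : Real.log m ≤ Real.log pstar := Real.log_le_log hmpos hpm
      rw [hm, Real.log_div one_ne_zero (by linarith), Real.log_one] at h1
      linarith
    · calc Real.log pstar ≤ Real.log 1 := Real.log_le_log hppos hp1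
        _ = 0 := Real.log_one
        _ ≤ Real.log (1 + lam) := Real.log_nonneg (by linarith)
  set M : ℝ := 2 * Real.log (1 + lam) with hMdef
  have hMnn : 0 ≤ M := by
    rw [hMdef]
    have := Real.log_nonneg (show (1:ℝ) ≤ 1 + lam by linarith)
    linarith
  rw [Metric.tendsto_atTop]
  intro ε hε
  have hδ : 0 < ε * m / 4 := by positivity
  obtain ⟨r, hr1, hr2⟩ : ∃ r, R r < ε * m / 4 ∧ |q r - pstar| < ε * m / 4 := by
    obtain ⟨N1, hN1⟩ := eventually_atTop.1 (hR0.eventually (gt_mem_nhds hδ))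
    obtain ⟨N2, hN2⟩ := Metric.tendsto_atTop.1 hp (ε * m / 4) hδ
    refine ⟨max N1 N2, hN1 _ (le_max_left _ _), ?_⟩
    have := hN2 (max N1 N2) (le_max_right _ _)
    rwa [Real.dist_eq] at this
  set C : ℝ := M * (2 * r * d) with hC
  have hCnn : 0 ≤ C := by rw [hC]; positivity
  obtain ⟨N0, hN0⟩ := exists_nat_gt (2 * C / ε)
  refine ⟨max N0 r, fun n hn => ?_⟩
  have hnN0 : N0 ≤ n := le_trans (le_max_left _ _) hn
  have hnr : r ≤ n := le_trans (le_max_right _ _) hn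
  -- notation
  set B := latCube d n with hB
  set Nc : ℝ := (B.card : ℝ) with hNc
  have hNcpos : 0 < Nc := by
    rw [hNc, hB, card_latCube]
    positivity
  -- the sum expression
  have hlog : Real.log (hcZd lam B) = ∑ v ∈ B, -Real.log (Pterm lam B v) :=
    logZ_eq hlam B
  set g : (Fin d → ℤ) → ℝ := fun v => -Real.log (Pterm lam B v) + Real.log pstar with hg
  have hsplit : Real.log (hcZd lam B) / Nc - (-Real.log pstar) = (∑ v ∈ B, g v) / Nc := by
    rw [hlog, hg]
    rw [Finset.sum_add_distrib, Finset.sum_const, nsmul_eq_mul, ← hNc]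
    field_simp
    ring
  -- bulk and boundary
  set blk := latCube d (n - r) with hblk
  have hblksub : blk ⊆ B := by rw [hblk, hB]; exact latCube_mono (Nat.sub_le n r)
  -- bulk estimate
  have hbulk : ∀ v ∈ blk, |g v| ≤ ε / 2 := by
    intro v hv
    have hA1 : ((latCube d n).filter (fun u => lexPrec u v ∨ u = v)).image (· - v)
        ∩ latCube d r = halfLat d r := bulk_inter hnr (hblk ▸ hv)
    have hA2 : halfLat d r ∩ latCube d r = halfLat d r :=
      Finset.inter_eq_left.2 (Finset.filter_subset _ _)
    have hssm := hRssm r _ _ (hA1.trans hA2.symm)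
    -- hssm : |Pterm lam B v - q r| ≤ R r
    have hPterm : m ≤ Pterm lam B v := le_hcPnot0 hlam _
    have hdiff : |Pterm lam B v - pstar| ≤ R r + ε * m / 4 := by
      calc |Pterm lam B v - pstar| ≤ |Pterm lam B v - q r| + |q r - pstar| := by
            have := abs_sub_le (Pterm lam B v) (q r) pstar
            linarith
        _ ≤ R r + ε * m / 4 := add_le_add hssm hr2.le
    have hgv : |g v| = |Real.log pstar - Real.log (Pterm lam B v)| := by
      rw [hg]; ring_nf
    rw [hgv]
    calc |Real.log pstar - Real.log (Pterm lam B v)|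
        ≤ |pstar - Pterm lam B v| / m := abs_log_sub_log_le hmpos hpm hPterm
      _ = |Pterm lam B v - pstar| / m := by rw [abs_sub_comm]
      _ ≤ (R r + ε * m / 4) / m := by gcongr
      _ ≤ (ε * m / 4 + ε * m / 4) / m := by gcongr
      _ = ε / 2 := by field_simp; ring
  -- boundary estimate
  have hbdry : ∀ v ∈ B, |g v| ≤ M := by
    intro v hv
    have h1 : |Real.log (Pterm lam B v)| ≤ Real.log (1 + lam) :=
      abs_log_hcPnot0_le hlam _
    calc |g v| ≤ |-Real.log (Pterm lam B v)| + |Real.log pstar| := abs_add_le _ _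
      _ ≤ Real.log (1 + lam) + Real.log (1 + lam) := by
          rw [abs_neg]; exact add_le_add h1 habsp
      _ = M := by rw [hMdef]; ring
  -- sum bound
  set Nc' : ℝ := (blk.card : ℝ) with hNc'
  have hNcc : Nc' ≤ Nc := by
    rw [hNc, hNc']
    exact_mod_cast Finset.card_le_card hblksub
  have hsdcard : ((B \ blk).card : ℝ) = Nc - Nc' := by
    rw [Finset.card_sdiff_of_subset hblksub, Nat.cast_sub (Finset.card_le_card hblksub)]
  have habs_sum : |∑ v ∈ B, g v| ≤ Nc * (ε / 2) + (Nc - Nc') * M := by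
    have h1 : ∑ v ∈ blk, |g v| ≤ Nc' * (ε / 2) := by
      calc ∑ v ∈ blk, |g v| ≤ ∑ _v ∈ blk, ε / 2 := Finset.sum_le_sum hbulk
        _ = Nc' * (ε / 2) := by rw [Finset.sum_const, nsmul_eq_mul, hNc']
    have h2 : ∑ v ∈ B \ blk, |g v| ≤ (Nc - Nc') * M := by
      calc ∑ v ∈ B \ blk, |g v| ≤ ∑ _v ∈ B \ blk, M :=
            Finset.sum_le_sum (fun v hv => hbdry v (Finset.mem_sdiff.1 hv).1)
        _ = ((B \ blk).card : ℝ) * M := by rw [Finset.sum_const, nsmul_eq_mul]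
        _ = (Nc - Nc') * M := by rw [hsdcard]
    calc |∑ v ∈ B, g v| ≤ ∑ v ∈ B, |g v| := Finset.abs_sum_le_sum_abs _ _
      _ = ∑ v ∈ B \ blk, |g v| + ∑ v ∈ blk, |g v| := (Finset.sum_sdiff hblksub).symm
      _ ≤ (Nc - Nc') * M + Nc' * (ε / 2) := add_le_add h2 h1
      _ ≤ Nc * (ε / 2) + (Nc - Nc') * M := by nlinarith [hNcc, hε.le]
  -- cardinality of the boundary layer
  have hnr' : (r : ℝ) ≤ (n : ℝ) := Nat.cast_le.2 hnr
  have hNceq : Nc = (2 * (n : ℝ) + 1) ^ d := by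
    rw [hNc, hB, card_latCube]; push_cast; ring_nf
  have hNc'eq : Nc' = (2 * ((n : ℝ) - r) + 1) ^ d := by
    rw [hNc', hblk, card_latCube]; push_cast [Nat.cast_sub hnr]; ring_nf
  have hcard : Nc - Nc' ≤ (d : ℝ) * (2 * r) * (2 * (n : ℝ) + 1) ^ (d - 1) := by
    rw [hNceq, hNc'eq]
    calc (2 * (n:ℝ) + 1) ^ d - (2 * ((n:ℝ) - r) + 1) ^ d
        ≤ (d : ℝ) * ((2 * (n:ℝ) + 1) - (2 * ((n:ℝ) - r) + 1)) * (2 * (n:ℝ) + 1) ^ (d - 1) :=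
          pow_sub_pow_le_real (by linarith) (by linarith) d
      _ = (d : ℝ) * (2 * r) * (2 * (n : ℝ) + 1) ^ (d - 1) := by ring_nf
  have hapos : (0 : ℝ) < 2 * (n : ℝ) + 1 := by positivity
  have hratio : (Nc - Nc') * M ≤ C / (2 * (n : ℝ) + 1) * Nc := by
    have hpow : (2 * (n:ℝ) + 1) ^ d = (2 * (n:ℝ) + 1) * (2 * (n:ℝ) + 1) ^ (d - 1) := by
      conv_lhs => rw [show d = 1 + (d - 1) by omega]
      rw [pow_add, pow_one]
    calc (Nc - Nc') * M ≤ ((d : ℝ) * (2 * r) * (2 * (n:ℝ) + 1) ^ (d - 1)) * M :=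
          mul_le_mul_of_nonneg_right hcard hMnn
      _ = C / (2 * (n:ℝ) + 1) * ((2 * (n:ℝ) + 1) ^ d) := by
          rw [hpow, hC]
          field_simp
      _ = C / (2 * (n:ℝ) + 1) * Nc := by rw [hNceq]
  have hlast : C / (2 * (n : ℝ) + 1) < ε / 2 := by
    rw [div_lt_iff₀ hapos]
    have h1 : 2 * C < ε * N0 := by
      rw [div_lt_iff₀ hε] at hN0
      linarith [hN0]
    have h2 : (N0 : ℝ) ≤ (n : ℝ) := Nat.cast_le.2 hnN0
    have h3 : ε * N0 ≤ ε * n := mul_le_mul_of_nonneg_left h2 hε.le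
    have h4 : ε * n ≤ ε * (2 * (n : ℝ) + 1) := by
      have : (n : ℝ) ≤ 2 * (n : ℝ) + 1 := by
        have := Nat.cast_nonneg (α := ℝ) n
        linarith
      exact mul_le_mul_of_nonneg_left this hε.le
    linarith
  rw [Real.dist_eq, hsplit, abs_div, abs_of_pos hNcpos]
  have htot : |∑ v ∈ B, g v| / Nc ≤ ε / 2 + C / (2 * (n : ℝ) + 1) := by
    rw [div_le_iff₀ hNcpos]
    calc |∑ v ∈ B, g v| ≤ Nc * (ε / 2) + (Nc - Nc') * M := habs_sum
      _ ≤ Nc * (ε / 2) + C / (2 * (n:ℝ) + 1) * Nc := by linarith [hratio]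
      _ = (ε / 2 + C / (2 * (n:ℝ) + 1)) * Nc := by ring
  linarith
end
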